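/- arXiv:1011.2872 — 2 statements merged into one kernel-verified Lean document; each statement's English description precedes it below -/
import Mathlib

section
/- Let W_1 ≺ W_2 ≺ ⋯ be a sequence of windows (each W_k's shade being a pane of W_{k+1}), and suppose a subgraph of Z² contains, for each k ≥ 2, a vertical crossing of the cut-frame of ERB_k and a horizontal crossing of the extended bottom of ERB_k, and contains all edges inside ERB_1. Then from every point of the fork F(W_1) there is an infinite self-avoiding path to infinity within the union of the ERB_k's. -/
/-- Two sites of `ℤ²` are adjacent if they are at `L¹`-distance 1. -/
def SiteAdj (p q : ℤ × ℤ) : Prop :=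
  (p.1 - q.1).natAbs + (p.2 - q.2).natAbs = 1

/-- The rectangle `[x1,x2] × [y1,y2]` in `ℤ²`. -/
def Rect (x1 x2 y1 y2 : ℤ) : Set (ℤ × ℤ) :=
  {p | x1 ≤ p.1 ∧ p.1 ≤ x2 ∧ y1 ≤ p.2 ∧ p.2 ≤ y2}

/-- A horizontal crossing of `[x1,x2] × [y1,y2]` within the open set `S`. -/
def HCross (S : Set (ℤ × ℤ)) (x1 x2 y1 y2 : ℤ) : Prop :=
  ∃ m : ℕ, ∃ f : Fin (m + 1) → ℤ × ℤ,
    (∀ i, f i ∈ S ∧ f i ∈ Rect x1 x2 y1 y2) ∧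
    (∀ i : Fin m, SiteAdj (f i.castSucc) (f i.succ)) ∧
    (f 0).1 = x1 ∧ (f (Fin.last m)).1 = x2

/-- A vertical crossing of `[x1,x2] × [y1,y2]` within `S`. -/
def VCross (S : Set (ℤ × ℤ)) (x1 x2 y1 y2 : ℤ) : Prop :=
  ∃ m : ℕ, ∃ f : Fin (m + 1) → ℤ × ℤ,
    (∀ i, f i ∈ S ∧ f i ∈ Rect x1 x2 y1 y2) ∧
    (∀ i : Fin m, SiteAdj (f i.castSucc) (f i.succ)) ∧
    (f 0).2 = y1 ∧ (f (Fin.last m)).2 = y2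

/-- A window, determined by two congruent block complexes: `q` congruent
vertical frames of width `l` and `q` horizontal frames of width `l`, at mutual
distance `d`, inside a square shade with bottom-left corner `(a,b)`. -/
structure Window where
  a : ℤ
  b : ℤ
  l : ℕ
  d : ℕ
  q : ℕ
  hl : 0 < l
  hd : 0 < d
  hq : 2 ≤ q

namespace Window

/-- The side length `s(W) = q·l + (q−1)·d` of the window. -/
def s (W : Window) : ℕ := W.q * W.l + (W.q - 1) * W.d

/-- The `j`-th vertical frame `V_j` of the window. -/
def V (W : Window) (j : ℕ) : Set (ℤ × ℤ) :=
  Rect (W.a + (j * (W.l + W.d) : ℕ)) (W.a + (j * (W.l + W.d) : ℕ) + W.l - 1)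
    W.b (W.b + W.s - 1)

/-- The `j`-th horizontal frame `H_j` of the window. -/
def Hf (W : Window) (j : ℕ) : Set (ℤ × ℤ) :=
  Rect W.a (W.a + W.s - 1)
    (W.b + (j * (W.l + W.d) : ℕ)) (W.b + (j * (W.l + W.d) : ℕ) + W.l - 1)

/-- The fork of the window:
`F(W) = ((⋃_{i=1}^{q−1} V_i) ∪ H_0) \ (V_0 ∪ H_{q−1})`. -/
def fork (W : Window) : Set (ℤ × ℤ) :=
  ((⋃ j ∈ Set.Ico 1 W.q, W.V j) ∪ W.Hf 0) \ (W.V 0 ∪ W.Hf (W.q - 1))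

/-- `W.Prec Wp i j` states that the shade of `W` is the pane of `Wp` in pane
position `(i,j)` (so in particular `s(W) = d(Wp)`); this is the relation
`W ≺ Wp` together with the position data of the pane. -/
def Prec (W Wp : Window) (i j : ℕ) : Prop :=
  i + 1 < Wp.q ∧ j + 1 < Wp.q ∧ W.s = Wp.d ∧
    W.a = Wp.a + (i * (Wp.l + Wp.d) : ℕ) + Wp.l ∧
    W.b = Wp.b + (j * (Wp.l + Wp.d) : ℕ) + Wp.l

end Window

/-- The cut-frame `cut(V_{i+1})` of a window `Wk`: the `(i+1)`-st vertical
frame with the top horizontal frame removed (a `w × (s − w)` rectangle);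
`i` is the pane column of the previous window, so this is the vertical frame
attached to the previous window from the right. -/
def cutRect (Wk : Window) (i : ℕ) : Set (ℤ × ℤ) :=
  Rect (Wk.a + ((i + 1) * (Wk.l + Wk.d) : ℕ))
    (Wk.a + ((i + 1) * (Wk.l + Wk.d) : ℕ) + Wk.l - 1)
    Wk.b (Wk.b + Wk.s - Wk.l - 1)

/-- The extended bottom `E_k` of a window `Wk`: the bottom of its fork,
extended to the right by the frame width `w'` of the next window
(an `(s − w + w') × w` rectangle). -/
def botRect (Wk : Window) (w' : ℕ) : Set (ℤ × ℤ) :=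
  Rect (Wk.a + Wk.l) (Wk.a + Wk.s - 1 + w') Wk.b (Wk.b + Wk.l - 1)

/-- The escape route to the right and to the bottom: for `k ≥ 2`,
`ERB_k = cut(V_k^+) ∪ E_k`, while `ERB_1 = F(W_1) ∪ E_1`. -/
def ERB (W : ℕ → Window) (I : ℕ → ℕ) : ℕ → Set (ℤ × ℤ) := fun k =>
  if k = 1 then (W 1).fork ∪ botRect (W 1) (W 2).l
  else cutRect (W k) (I (k - 1)) ∪ botRect (W k) (W (k + 1)).l


namespace Road

lemma adj_symm {p q : ℤ × ℤ} (h : SiteAdj p q) : SiteAdj q p := by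
  unfold SiteAdj at *; omega

lemma adj_cases {p q : ℤ × ℤ} (h : SiteAdj p q) :
    (p.2 = q.2 ∧ ((p.1 = q.1 + 1) ∨ (p.1 = q.1 - 1))) ∨
    (p.1 = q.1 ∧ ((p.2 = q.2 + 1) ∨ (p.2 = q.2 - 1))) := by
  unfold SiteAdj at h; omega

/-- Discrete intermediate value theorem. -/
lemma ivt (g : ℕ → ℤ) (n : ℕ) (hstep : ∀ i < n, (g (i+1) - g i).natAbs ≤ 1)
    (c : ℤ) (h0 : g 0 ≤ c) (hn : c ≤ g n) : ∃ i ≤ n, g i = c := by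
  induction n with
  | zero => exact ⟨0, le_refl _, le_antisymm h0 hn⟩
  | succ n ih =>
    by_cases hc : c ≤ g n
    · obtain ⟨i, hi, hgi⟩ := ih (fun i hi => hstep i (by omega)) hc
      exact ⟨i, by omega, hgi⟩
    · refine ⟨n+1, le_refl _, ?_⟩
      have := hstep n (by omega)
      omega

lemma ivt_shift (g : ℕ → ℤ) (a b : ℕ) (hab : a ≤ b)
    (hstep : ∀ i, a ≤ i → i < b → (g (i+1) - g i).natAbs ≤ 1)
    (c : ℤ) (h0 : g a ≤ c) (hn : c ≤ g b) : ∃ i, a ≤ i ∧ i ≤ b ∧ g i = c := by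
  obtain ⟨i, hi, hgi⟩ := ivt (fun t => g (a + t)) (b - a)
    (fun i hi => hstep (a+i) (by omega) (by omega)) c h0 (by
      show c ≤ g (a + (b - a))
      have : a + (b - a) = b := by omega
      rw [this]; exact hn)
  exact ⟨a + i, by omega, by omega, hgi⟩

/-- Extract a monotone sub-window: indices `s ≤ t` with `g s = c1`, `g t = c2`,
and all values in between inside `[c1, c2]`. -/
lemma subseg (g : ℕ → ℤ) (n : ℕ) (hstep : ∀ i < n, (g (i+1) - g i).natAbs ≤ 1)
    (c1 c2 : ℤ) (h12 : c1 ≤ c2) (h0 : g 0 ≤ c1) (hn : c2 ≤ g n) :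
    ∃ s t, s ≤ t ∧ t ≤ n ∧ g s = c1 ∧ g t = c2 ∧
      ∀ i, s ≤ i → i ≤ t → c1 ≤ g i ∧ g i ≤ c2 := by
  classical
  obtain ⟨t0, ht0, hgt0⟩ := ivt g n hstep c2 (le_trans h0 h12) hn
  -- least index with value c2
  have hex : ∃ t, g t = c2 := ⟨t0, hgt0⟩
  set t := Nat.find hex with htdef
  have hgt : g t = c2 := Nat.find_spec hex
  have htle : t ≤ n := le_trans (Nat.find_min' hex hgt0) ht0
  have htmin : ∀ j < t, g j ≠ c2 := fun j hj => Nat.find_min hex hj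
  have hup : ∀ i ≤ t, g i ≤ c2 := by
    intro i hi
    by_contra hgi
    push_neg at hgi
    obtain ⟨j, hj, hgj⟩ := ivt g i (fun j hj => hstep j (by omega)) c2
      (le_trans h0 h12) (le_of_lt hgi)
    have : t ≤ j := Nat.find_min' hex hgj
    have hit : i = t := by omega
    rw [hit] at hgi; omega
  -- greatest index ≤ t with value c1
  obtain ⟨s0, hs0, hgs0⟩ := ivt g t (fun j hj => hstep j (by omega)) c1 h0 (by omega)
  set s := Nat.findGreatest (fun s' => g s' = c1) t with hsdef
  have hgs : g s = c1 := Nat.findGreatest_spec (P := fun s' => g s' = c1) (m := s0) hs0 hgs0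
  have hst : s ≤ t := Nat.findGreatest_le t
  have hsmax : ∀ j, s < j → j ≤ t → g j ≠ c1 := fun j h1 h2 =>
    Nat.findGreatest_is_greatest h1 h2
  refine ⟨s, t, hst, htle, hgs, hgt, ?_⟩
  intro i hsi hit
  refine ⟨?_, hup i hit⟩
  by_contra hgi
  push_neg at hgi
  have hins : i ≠ s := by intro h; rw [h, hgs] at hgi; omega
  obtain ⟨j, hj1, hj2, hgj⟩ := ivt_shift g i t hit
    (fun j h1 h2 => hstep j (by omega)) c1 (le_of_lt hgi) (by omega)
  exact hsmax j (by omega) hj2 hgj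

/-- Convert a Fin-indexed crossing to an ℕ-indexed one. -/
lemma hcross_elim {S : Set (ℤ × ℤ)} {x1 x2 y1 y2 : ℤ} (h : HCross S x1 x2 y1 y2) :
    ∃ m, ∃ g : ℕ → ℤ × ℤ,
      (∀ i ≤ m, g i ∈ S ∧ g i ∈ Rect x1 x2 y1 y2) ∧
      (∀ i < m, SiteAdj (g i) (g (i+1))) ∧
      (g 0).1 = x1 ∧ (g m).1 = x2 := by
  obtain ⟨m, f, hmem, hadj, h0, hm⟩ := h
  refine ⟨m, fun i => f ⟨min i m, Nat.lt_succ_of_le (Nat.min_le_right i m)⟩,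
    fun i _ => hmem _, ?_, ?_, ?_⟩
  · intro i hi
    show SiteAdj (f ⟨min i m, Nat.lt_succ_of_le (Nat.min_le_right i m)⟩)
      (f ⟨min (i+1) m, Nat.lt_succ_of_le (Nat.min_le_right (i+1) m)⟩)
    have h1 : (⟨min i m, Nat.lt_succ_of_le (Nat.min_le_right i m)⟩ : Fin (m+1))
        = (⟨i, hi⟩ : Fin m).castSucc := by
      apply Fin.ext; simp [Fin.castSucc]; omega
    have h2 : (⟨min (i+1) m, Nat.lt_succ_of_le (Nat.min_le_right (i+1) m)⟩ : Fin (m+1))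
        = (⟨i, hi⟩ : Fin m).succ := by
      apply Fin.ext; simp [Fin.succ]; omega
    rw [h1, h2]; exact hadj _
  · show (f ⟨min 0 m, Nat.lt_succ_of_le (Nat.min_le_right 0 m)⟩).1 = x1
    have h1 : (⟨min 0 m, Nat.lt_succ_of_le (Nat.min_le_right 0 m)⟩ : Fin (m+1)) = 0 := by
      apply Fin.ext; simp
    rw [h1]; exact h0
  · show (f ⟨min m m, Nat.lt_succ_of_le (Nat.min_le_right m m)⟩).1 = x2
    have h1 : (⟨min m m, Nat.lt_succ_of_le (Nat.min_le_right m m)⟩ : Fin (m+1))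
        = Fin.last m := by
      apply Fin.ext; simp
    rw [h1]; exact hm

lemma vcross_elim {S : Set (ℤ × ℤ)} {x1 x2 y1 y2 : ℤ} (h : VCross S x1 x2 y1 y2) :
    ∃ m, ∃ g : ℕ → ℤ × ℤ,
      (∀ i ≤ m, g i ∈ S ∧ g i ∈ Rect x1 x2 y1 y2) ∧
      (∀ i < m, SiteAdj (g i) (g (i+1))) ∧
      (g 0).2 = y1 ∧ (g m).2 = y2 := by
  obtain ⟨m, f, hmem, hadj, h0, hm⟩ := h
  refine ⟨m, fun i => f ⟨min i m, Nat.lt_succ_of_le (Nat.min_le_right i m)⟩,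
    fun i _ => hmem _, ?_, ?_, ?_⟩
  · intro i hi
    show SiteAdj (f ⟨min i m, Nat.lt_succ_of_le (Nat.min_le_right i m)⟩)
      (f ⟨min (i+1) m, Nat.lt_succ_of_le (Nat.min_le_right (i+1) m)⟩)
    have h1 : (⟨min i m, Nat.lt_succ_of_le (Nat.min_le_right i m)⟩ : Fin (m+1))
        = (⟨i, hi⟩ : Fin m).castSucc := by
      apply Fin.ext; simp [Fin.castSucc]; omega
    have h2 : (⟨min (i+1) m, Nat.lt_succ_of_le (Nat.min_le_right (i+1) m)⟩ : Fin (m+1))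
        = (⟨i, hi⟩ : Fin m).succ := by
      apply Fin.ext; simp [Fin.succ]; omega
    rw [h1, h2]; exact hadj _
  · show (f ⟨min 0 m, Nat.lt_succ_of_le (Nat.min_le_right 0 m)⟩).2 = y1
    have h1 : (⟨min 0 m, Nat.lt_succ_of_le (Nat.min_le_right 0 m)⟩ : Fin (m+1)) = 0 := by
      apply Fin.ext; simp
    rw [h1]; exact h0
  · show (f ⟨min m m, Nat.lt_succ_of_le (Nat.min_le_right m m)⟩).2 = y2
    have h1 : (⟨min m m, Nat.lt_succ_of_le (Nat.min_le_right m m)⟩ : Fin (m+1))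
        = Fin.last m := by
      apply Fin.ext; simp
    rw [h1]; exact hm



def chi (x y : ℤ) (p : ℤ × ℤ) : ZMod 2 := if p.1 ≤ x ∧ p.2 ≤ y then 1 else 0

def Phi (H : ℕ → ℤ × ℤ) (M : ℕ) (x y : ℤ) : ZMod 2 :=
  ∑ i ∈ Finset.range M,
    (if (H i).2 = (H (i+1)).2 then chi x y (H i) + chi x y (H (i+1)) else 0)

def Psi (H : ℕ → ℤ × ℤ) (M : ℕ) (x y : ℤ) : ZMod 2 :=
  ∑ i ∈ Finset.range M,
    (if (H i).1 = (H (i+1)).1 then chi x y (H i) + chi x y (H (i+1)) else 0)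

lemma telescope_zmod2 (c : ℕ → ZMod 2) (M : ℕ) :
    ∑ i ∈ Finset.range M, (c i + c (i+1)) = c 0 + c M := by
  induction M with
  | zero => simp [CharTwo.add_self_eq_zero]
  | succ M ih =>
    rw [Finset.sum_range_succ, ih]
    have : c M + c M = 0 := CharTwo.add_self_eq_zero _
    linear_combination this

lemma phi_add_psi (H : ℕ → ℤ × ℤ) (M : ℕ)
    (hadj : ∀ i < M, SiteAdj (H i) (H (i+1))) (x y : ℤ) :
    Phi H M x y + Psi H M x y = chi x y (H 0) + chi x y (H M) := by
  unfold Phi Psi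
  rw [← Finset.sum_add_distrib]
  rw [show (chi x y (H 0) + chi x y (H M)) =
    ∑ i ∈ Finset.range M, (chi x y (H i) + chi x y (H (i+1))) from
      (telescope_zmod2 (fun i => chi x y (H i)) M).symm]
  apply Finset.sum_congr rfl
  intro i hi
  have ha := hadj i (Finset.mem_range.mp hi)
  unfold SiteAdj at ha
  by_cases h2 : (H i).2 = (H (i+1)).2
  · have h1 : ¬ (H i).1 = (H (i+1)).1 := by omega
    rw [if_pos h2, if_neg h1, add_zero]
  · have h1 : (H i).1 = (H (i+1)).1 := by omega
    rw [if_neg h2, if_pos h1, zero_add]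

lemma phi_up (H : ℕ → ℤ × ℤ) (M : ℕ) (x y : ℤ)
    (hyp : ∀ i < M, (H i).2 = (H (i+1)).2 → (H i).2 = y + 1 →
      (((H i).1 ≤ x) ↔ ((H (i+1)).1 ≤ x))) :
    Phi H M x (y+1) = Phi H M x y := by
  unfold Phi
  apply Finset.sum_congr rfl
  intro i hi
  by_cases h2 : (H i).2 = (H (i+1)).2
  · rw [if_pos h2, if_pos h2]
    unfold chi
    by_cases hb : (H i).2 = y + 1
    · have hb' : (H (i+1)).2 = y + 1 := by omega
      have hiff := hyp i (Finset.mem_range.mp hi) h2 hb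
      by_cases hc : (H i).1 ≤ x
      · rw [if_pos ⟨hc, by omega⟩, if_pos ⟨hiff.mp hc, by omega⟩,
          if_neg (by omega), if_neg (by omega)]
        simp [CharTwo.add_self_eq_zero]
      · rw [if_neg (by intro hh; exact hc hh.1),
          if_neg (by intro hh; exact hc (hiff.mpr hh.1)),
          if_neg (by omega), if_neg (by omega)]
    · have e1 : ((H i).1 ≤ x ∧ (H i).2 ≤ y + 1) ↔ ((H i).1 ≤ x ∧ (H i).2 ≤ y) := by omega
      have e2 : ((H (i+1)).1 ≤ x ∧ (H (i+1)).2 ≤ y + 1) ↔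
          ((H (i+1)).1 ≤ x ∧ (H (i+1)).2 ≤ y) := by omega
      rw [if_congr e1 rfl rfl, if_congr e2 rfl rfl]
  · rw [if_neg h2, if_neg h2]

lemma psi_right (H : ℕ → ℤ × ℤ) (M : ℕ) (x y : ℤ)
    (hyp : ∀ i < M, (H i).1 = (H (i+1)).1 → (H i).1 = x + 1 →
      (((H i).2 ≤ y) ↔ ((H (i+1)).2 ≤ y))) :
    Psi H M (x+1) y = Psi H M x y := by
  unfold Psi
  apply Finset.sum_congr rfl
  intro i hi
  by_cases h1 : (H i).1 = (H (i+1)).1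
  · rw [if_pos h1, if_pos h1]
    unfold chi
    by_cases ha : (H i).1 = x + 1
    · have ha' : (H (i+1)).1 = x + 1 := by omega
      have hiff := hyp i (Finset.mem_range.mp hi) h1 ha
      by_cases hc : (H i).2 ≤ y
      · rw [if_pos ⟨by omega, hc⟩, if_pos ⟨by omega, hiff.mp hc⟩,
          if_neg (by omega), if_neg (by omega)]
        simp [CharTwo.add_self_eq_zero]
      · rw [if_neg (by intro hh; exact hc hh.2),
          if_neg (by intro hh; exact hc (hiff.mpr hh.2)),
          if_neg (by omega), if_neg (by omega)]
    · have e1 : ((H i).1 ≤ x + 1 ∧ (H i).2 ≤ y) ↔ ((H i).1 ≤ x ∧ (H i).2 ≤ y) := by omega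
      have e2 : ((H (i+1)).1 ≤ x + 1 ∧ (H (i+1)).2 ≤ y) ↔
          ((H (i+1)).1 ≤ x ∧ (H (i+1)).2 ≤ y) := by omega
      rw [if_congr e1 rfl rfl, if_congr e2 rfl rfl]
  · rw [if_neg h1, if_neg h1]

lemma phi_right (H : ℕ → ℤ × ℤ) (M : ℕ)
    (hadj : ∀ i < M, SiteAdj (H i) (H (i+1))) (x y : ℤ)
    (hyp : ∀ i < M, (H i).1 = (H (i+1)).1 → (H i).1 = x + 1 →
      (((H i).2 ≤ y) ↔ ((H (i+1)).2 ≤ y)))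
    (e0 : ((H 0).1 ≤ x) ↔ ((H 0).1 ≤ x + 1))
    (eM : ((H M).1 ≤ x) ↔ ((H M).1 ≤ x + 1)) :
    Phi H M (x+1) y = Phi H M x y := by
  have t1 := phi_add_psi H M hadj x y
  have t2 := phi_add_psi H M hadj (x+1) y
  have t3 := psi_right H M x y hyp
  have c0 : chi (x+1) y (H 0) = chi x y (H 0) := by
    unfold chi
    exact if_congr (and_congr_left (fun _ => e0.symm)) rfl rfl
  have cM : chi (x+1) y (H M) = chi x y (H M) := by
    unfold chi
    exact if_congr (and_congr_left (fun _ => eM.symm)) rfl rfl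
  rw [c0, cM, t3] at t2
  exact add_right_cancel (t2.trans t1.symm)

lemma phi_low (H : ℕ → ℤ × ℤ) (M : ℕ) (x y : ℤ)
    (hyp : ∀ i ≤ M, y < (H i).2) : Phi H M x y = 0 := by
  unfold Phi
  apply Finset.sum_eq_zero
  intro i hi
  have hi' := Finset.mem_range.mp hi
  by_cases h2 : (H i).2 = (H (i+1)).2
  · rw [if_pos h2]
    unfold chi
    rw [if_neg (by have := hyp i (by omega); omega),
      if_neg (by have := hyp (i+1) (by omega); omega)]
    simp
  · rw [if_neg h2]

lemma psi_top (H : ℕ → ℤ × ℤ) (M : ℕ) (x y : ℤ)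
    (hyp : ∀ i ≤ M, (H i).2 ≤ y) : Psi H M x y = 0 := by
  unfold Psi
  apply Finset.sum_eq_zero
  intro i hi
  have hi' := Finset.mem_range.mp hi
  by_cases h1 : (H i).1 = (H (i+1)).1
  · rw [if_pos h1]
    unfold chi
    have e1 : ((H i).1 ≤ x ∧ (H i).2 ≤ y) ↔ ((H i).1 ≤ x) := by
      have := hyp i (by omega); tauto
    have e2 : ((H (i+1)).1 ≤ x ∧ (H (i+1)).2 ≤ y) ↔ ((H (i+1)).1 ≤ x) := by
      have := hyp (i+1) (by omega); tauto
    rw [if_congr e1 rfl rfl, if_congr e2 rfl rfl, h1]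
    simp [CharTwo.add_self_eq_zero]
  · rw [if_neg h1]

/-- Two orthogonal crossings of the same rectangle share a site. -/
lemma cross_meet (x1 x2 y1 y2 : ℤ)
    (h : ℕ → ℤ × ℤ) (m : ℕ)
    (hadj : ∀ i < m, SiteAdj (h i) (h (i+1)))
    (hmem : ∀ i ≤ m, h i ∈ Rect x1 x2 y1 y2)
    (h0 : (h 0).1 = x1) (hm : (h m).1 = x2)
    (v : ℕ → ℤ × ℤ) (n : ℕ)
    (vadj : ∀ j < n, SiteAdj (v j) (v (j+1)))
    (vmem : ∀ j ≤ n, v j ∈ Rect x1 x2 y1 y2)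
    (v0 : (v 0).2 = y1) (vn : (v n).2 = y2) :
    ∃ i ≤ m, ∃ j ≤ n, h i = v j := by
  by_contra hcon
  push_neg at hcon
  set M := m + 2 with hMdef
  set H : ℕ → ℤ × ℤ := fun i =>
    if i = 0 then ((h 0).1 - 1, (h 0).2)
    else if i ≤ m + 1 then h (i-1) else ((h m).1 + 1, (h m).2) with hHdef
  have HE0 : H 0 = ((h 0).1 - 1, (h 0).2) := by simp [hHdef]
  have Hmid : ∀ i, 1 ≤ i → i ≤ m+1 → H i = h (i-1) := by
    intro i hi1 hi2
    simp only [hHdef]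
    rw [if_neg (by omega), if_pos hi2]
  have HEM : H M = ((h m).1 + 1, (h m).2) := by
    simp only [hHdef, hMdef]
    rw [if_neg (by omega), if_neg (by omega)]
  have HAdj : ∀ i < M, SiteAdj (H i) (H (i+1)) := by
    intro i hi
    rcases Nat.eq_zero_or_pos i with h' | h'
    · subst h'
      rw [HE0, Hmid 1 (by omega) (by omega)]
      unfold SiteAdj
      simp
    · rcases Nat.lt_or_ge i (m+1) with h'' | h''
      · rw [Hmid i (by omega) (by omega), Hmid (i+1) (by omega) (by omega)]
        have e : i - 1 + 1 = i := by omega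
        have := hadj (i-1) (by omega)
        rw [e] at this
        exact this
      · have : i = m + 1 := by omega
        subst this
        rw [Hmid (m+1) (by omega) (by omega), show m + 1 + 1 = M from rfl, HEM]
        have e : m + 1 - 1 = m := by omega
        rw [e]
        unfold SiteAdj
        simp
  have Hmemy : ∀ i ≤ M, y1 ≤ (H i).2 ∧ (H i).2 ≤ y2 := by
    intro i hi
    rcases Nat.eq_zero_or_pos i with h' | h'
    · subst h'
      rw [HE0]
      have := hmem 0 (by omega)
      exact ⟨this.2.2.1, this.2.2.2⟩
    · rcases Nat.lt_or_ge i (m+2) with h'' | h''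
      · rw [Hmid i (by omega) (by omega)]
        have := hmem (i-1) (by omega)
        exact ⟨this.2.2.1, this.2.2.2⟩
      · have : i = M := by omega
        subst this
        rw [HEM]
        have := hmem m (by omega)
        exact ⟨this.2.2.1, this.2.2.2⟩
  have hH0x : (H 0).1 = x1 - 1 := by rw [HE0]; simp [h0]
  have hHMx : (H M).1 = x2 + 1 := by rw [HEM]; simp [hm]
  have Hdisj : ∀ i ≤ M, ∀ j ≤ n, H i ≠ v j := by
    intro i hi j hj heq
    have hvx := vmem j hj
    rcases Nat.eq_zero_or_pos i with h' | h'
    · subst h'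
      have : (v j).1 = x1 - 1 := by rw [← heq]; exact hH0x
      have := hvx.1
      omega
    · rcases Nat.lt_or_ge i (m+2) with h'' | h''
      · rw [Hmid i (by omega) (by omega)] at heq
        exact hcon (i-1) (by omega) j hj heq
      · have : i = M := by omega
        subst this
        have : (v j).1 = x2 + 1 := by rw [← heq]; exact hHMx
        have := hvx.2.1
        omega
  -- the invariant along v
  have key : ∀ j ≤ n, Phi H M ((v j).1 - 1) ((v j).2 - 1)
      = Phi H M ((v 0).1 - 1) ((v 0).2 - 1) := by
    intro j
    induction j with
    | zero => intro _; rfl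
    | succ j ih =>
      intro hj
      have hjn : j ≤ n := by omega
      rw [← ih hjn]
      have hsa := vadj j (by omega)
      rcases adj_cases hsa with ⟨hyy, hxx⟩ | ⟨hxx, hyy⟩
      · -- horizontal step of v
        rcases hxx with hl | hr
        · -- v (j+1) is to the left : (v j).1 = (v (j+1)).1 + 1
          have goal' := phi_right H M HAdj ((v j).1 - 2) ((v j).2 - 1)
            (by
              intro i hi hvert hcol
              by_contra hniff
              have hs := HAdj i hi
              unfold SiteAdj at hs
              rcases Decidable.em ((H i).2 ≤ (v j).2 - 1) with hc | hc
              · have h1 : (H (i+1)).2 = (v j).2 := by omega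
                have : H (i+1) = v (j+1) := by
                  have e1 : (H (i+1)).1 = (v (j+1)).1 := by omega
                  have e2 : (H (i+1)).2 = (v (j+1)).2 := by omega
                  exact Prod.ext e1 e2
                exact Hdisj (i+1) (by omega) (j+1) hj this
              · have h1 : (H i).2 = (v j).2 := by omega
                have : H i = v (j+1) := by
                  have e1 : (H i).1 = (v (j+1)).1 := by omega
                  have e2 : (H i).2 = (v (j+1)).2 := by omega
                  exact Prod.ext e1 e2
                exact Hdisj i (by omega) (j+1) hj this)
            (by
              have := (vmem (j+1) hj).1
              constructor <;> intro <;> omega)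
            (by
              have := (vmem j hjn).2.1
              rw [hHMx]
              constructor <;> intro <;> omega)
          have e : (v j).1 - 2 + 1 = (v j).1 - 1 := by ring
          rw [e] at goal'
          have e2 : (v (j+1)).1 - 1 = (v j).1 - 2 := by omega
          have e3 : (v (j+1)).2 - 1 = (v j).2 - 1 := by omega
          rw [e2, e3, ← goal']
        · -- v (j+1) is to the right : (v (j+1)).1 = (v j).1 + 1
          have goal' := phi_right H M HAdj ((v j).1 - 1) ((v j).2 - 1)
            (by
              intro i hi hvert hcol
              by_contra hniff
              have hs := HAdj i hi
              unfold SiteAdj at hs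
              rcases Decidable.em ((H i).2 ≤ (v j).2 - 1) with hc | hc
              · have : H (i+1) = v j := by
                  have e1 : (H (i+1)).1 = (v j).1 := by omega
                  have e2 : (H (i+1)).2 = (v j).2 := by omega
                  exact Prod.ext e1 e2
                exact Hdisj (i+1) (by omega) j hjn this
              · have : H i = v j := by
                  have e1 : (H i).1 = (v j).1 := by omega
                  have e2 : (H i).2 = (v j).2 := by omega
                  exact Prod.ext e1 e2
                exact Hdisj i (by omega) j hjn this)
            (by
              have := (vmem j hjn).1
              constructor <;> intro <;> omega)
            (by
              have := (vmem j hjn).2.1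
              rw [hHMx]
              constructor <;> intro <;> omega)
          have e : (v j).1 - 1 + 1 = (v j).1 := by ring
          rw [e] at goal'
          have e2 : (v (j+1)).1 - 1 = (v j).1 := by omega
          have e3 : (v (j+1)).2 - 1 = (v j).2 - 1 := by omega
          rw [e2, e3, goal']
      · -- vertical step of v
        rcases hyy with hd | hu
        · -- down-step : (v (j+1)).2 = (v j).2 - 1
          have goal' := phi_up H M ((v j).1 - 1) ((v j).2 - 2)
            (by
              intro i hi hhor hht
              by_contra hniff
              have hs := HAdj i hi
              unfold SiteAdj at hs
              rcases Decidable.em ((H i).1 ≤ (v j).1 - 1) with hc | hc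
              · have : H (i+1) = v (j+1) := by
                  have e1 : (H (i+1)).1 = (v (j+1)).1 := by omega
                  have e2 : (H (i+1)).2 = (v (j+1)).2 := by omega
                  exact Prod.ext e1 e2
                exact Hdisj (i+1) (by omega) (j+1) hj this
              · have : H i = v (j+1) := by
                  have e1 : (H i).1 = (v (j+1)).1 := by omega
                  have e2 : (H i).2 = (v (j+1)).2 := by omega
                  exact Prod.ext e1 e2
                exact Hdisj i (by omega) (j+1) hj this)
          have e : (v j).2 - 2 + 1 = (v j).2 - 1 := by ring
          rw [e] at goal'
          have e2 : (v (j+1)).1 - 1 = (v j).1 - 1 := by omega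
          have e3 : (v (j+1)).2 - 1 = (v j).2 - 2 := by omega
          rw [e2, e3, ← goal']
        · -- up-step : (v (j+1)).2 = (v j).2 + 1
          have goal' := phi_up H M ((v j).1 - 1) ((v j).2 - 1)
            (by
              intro i hi hhor hht
              by_contra hniff
              have hs := HAdj i hi
              unfold SiteAdj at hs
              rcases Decidable.em ((H i).1 ≤ (v j).1 - 1) with hc | hc
              · have : H (i+1) = v j := by
                  have e1 : (H (i+1)).1 = (v j).1 := by omega
                  have e2 : (H (i+1)).2 = (v j).2 := by omega
                  exact Prod.ext e1 e2
                exact Hdisj (i+1) (by omega) j hjn this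
              · have : H i = v j := by
                  have e1 : (H i).1 = (v j).1 := by omega
                  have e2 : (H i).2 = (v j).2 := by omega
                  exact Prod.ext e1 e2
                exact Hdisj i (by omega) j hjn this)
          have e : (v j).2 - 1 + 1 = (v j).2 := by ring
          rw [e] at goal'
          have e2 : (v (j+1)).1 - 1 = (v j).1 - 1 := by omega
          have e3 : (v (j+1)).2 - 1 = (v j).2 := by omega
          rw [e2, e3, goal']
  -- value at the start
  have hzero : Phi H M ((v 0).1 - 1) ((v 0).2 - 1) = 0 := by
    apply phi_low
    intro i hi
    have := (Hmemy i hi).1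
    omega
  -- value at the end
  have hone : Phi H M ((v n).1 - 1) ((v n).2 - 1) = 1 := by
    have step1 := phi_up H M ((v n).1 - 1) (y2 - 1)
      (by
        intro i hi hhor hht
        by_contra hniff
        have hs := HAdj i hi
        unfold SiteAdj at hs
        rcases Decidable.em ((H i).1 ≤ (v n).1 - 1) with hc | hc
        · have : H (i+1) = v n := by
            have e1 : (H (i+1)).1 = (v n).1 := by omega
            have e2 : (H (i+1)).2 = (v n).2 := by omega
            exact Prod.ext e1 e2
          exact Hdisj (i+1) (by omega) n (le_refl n) this
        · have : H i = v n := by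
            have e1 : (H i).1 = (v n).1 := by omega
            have e2 : (H i).2 = (v n).2 := by omega
            exact Prod.ext e1 e2
          exact Hdisj i (by omega) n (le_refl n) this)
    have e : y2 - 1 + 1 = y2 := by ring
    rw [e] at step1
    have step2 := phi_add_psi H M HAdj ((v n).1 - 1) y2
    have hpsi : Psi H M ((v n).1 - 1) y2 = 0 := by
      apply psi_top
      intro i hi
      exact (Hmemy i hi).2
    have hc0 : chi ((v n).1 - 1) y2 (H 0) = 1 := by
      unfold chi
      rw [if_pos]
      constructor
      · rw [hH0x]
        have := (vmem n (le_refl n)).1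
        omega
      · rw [HE0]
        exact (hmem 0 (by omega)).2.2.2
    have hcM : chi ((v n).1 - 1) y2 (H M) = 0 := by
      unfold chi
      rw [if_neg]
      intro hh
      rw [hHMx] at hh
      have := (vmem n (le_refl n)).2.1
      omega
    rw [hpsi, add_zero, hc0, hcM, add_zero] at step2
    rw [vn, ← step1, step2]
  rw [key n (le_refl n), hzero] at hone
  exact zero_ne_one hone




/-! ### Concatenation of two finite paths -/

def cat (nf : ℕ) (f g : ℕ → ℤ × ℤ) : ℕ → ℤ × ℤ :=
  fun i => if i ≤ nf then f i else g (i - nf)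

lemma cat_left {nf : ℕ} {f g : ℕ → ℤ × ℤ} {i : ℕ} (hi : i ≤ nf) :
    cat nf f g i = f i := if_pos hi

lemma cat_right {nf : ℕ} {f g : ℕ → ℤ × ℤ} (hend : f nf = g 0) (j : ℕ) :
    cat nf f g (nf + j) = g j := by
  rcases Nat.eq_zero_or_pos j with h | h
  · subst h
    rw [show nf + 0 = nf from rfl]
    rw [cat_left (le_refl nf), hend]
  · unfold cat
    rw [if_neg (by omega)]
    congr 1
    omega

lemma cat_adj {nf ng : ℕ} {f g : ℕ → ℤ × ℤ} (hend : f nf = g 0)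
    (hf : ∀ i < nf, SiteAdj (f i) (f (i+1)))
    (hg : ∀ j < ng, SiteAdj (g j) (g (j+1))) :
    ∀ i < nf + ng, SiteAdj (cat nf f g i) (cat nf f g (i+1)) := by
  intro i hi
  rcases Nat.lt_or_ge i nf with h | h
  · rw [cat_left (by omega), cat_left (by omega)]
    exact hf i h
  · have hA : cat nf f g i = g (i - nf) := by
      rcases Nat.eq_or_lt_of_le h with he | he
      · rw [cat_left (by omega), show i - nf = 0 by omega, ← hend]
        congr 1
        omega
      · unfold cat
        rw [if_neg (by omega)]
    have hB : cat nf f g (i+1) = g (i - nf + 1) := by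
      unfold cat
      rw [if_neg (by omega)]
      congr 1
      omega
    rw [hA, hB]
    exact hg (i - nf) (by omega)

lemma cat_sites {nf ng : ℕ} {f g : ℕ → ℤ × ℤ} (hend : f nf = g 0) :
    ∀ i ≤ nf + ng, (∃ i' ≤ nf, cat nf f g i = f i') ∨ (∃ j ≤ ng, cat nf f g i = g j) := by
  intro i hi
  rcases le_or_gt i nf with h | h
  · exact Or.inl ⟨i, h, cat_left h⟩
  · right
    refine ⟨i - nf, by omega, ?_⟩
    unfold cat
    rw [if_neg (by omega)]

/-! ### Monotone traversal of a path between two indices -/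

def tlen (i j : ℕ) : ℕ := if i ≤ j then j - i else i - j

def trav (g : ℕ → ℤ × ℤ) (i j : ℕ) : ℕ → ℤ × ℤ :=
  fun t => if i ≤ j then g (i + t) else g (i - t)

lemma trav_zero (g : ℕ → ℤ × ℤ) (i j : ℕ) : trav g i j 0 = g i := by
  unfold trav; split <;> simp

lemma trav_last (g : ℕ → ℤ × ℤ) (i j : ℕ) : trav g i j (tlen i j) = g j := by
  unfold trav tlen
  split <;> congr 1 <;> omega

lemma trav_adj (g : ℕ → ℤ × ℤ) (n i j : ℕ) (hi : i ≤ n) (hj : j ≤ n)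
    (hadj : ∀ t < n, SiteAdj (g t) (g (t+1))) :
    ∀ t < tlen i j, SiteAdj (trav g i j t) (trav g i j (t+1)) := by
  intro t ht
  unfold trav
  unfold tlen at ht
  by_cases h : i ≤ j
  · rw [if_pos h, if_pos h]
    rw [if_pos h] at ht
    have := hadj (i + t) (by omega)
    have e : i + (t+1) = i + t + 1 := by omega
    rw [e]
    exact this
  · rw [if_neg h, if_neg h]
    rw [if_neg h] at ht
    have := hadj (i - t - 1) (by omega)
    have e1 : i - t - 1 + 1 = i - t := by omega
    have e2 : i - (t + 1) = i - t - 1 := by omega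
    rw [e1] at this
    rw [e2]
    exact adj_symm this

lemma trav_sites (g : ℕ → ℤ × ℤ) (i j : ℕ) :
    ∀ t ≤ tlen i j, ∃ u, min i j ≤ u ∧ u ≤ max i j ∧ trav g i j t = g u := by
  intro t ht
  unfold trav
  unfold tlen at ht
  by_cases h : i ≤ j
  · rw [if_pos h] at ht ⊢
    exact ⟨i + t, by omega, by omega, rfl⟩
  · rw [if_neg h] at ht ⊢
    exact ⟨i - t, by omega, by omega, rfl⟩

/-! ### Straight segments -/

def vseg (p : ℤ × ℤ) : ℕ → ℤ × ℤ := fun t => (p.1, p.2 - t)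

def hseg (p : ℤ × ℤ) (c : ℤ) : ℕ → ℤ × ℤ :=
  fun t => (if p.1 ≤ c then p.1 + t else p.1 - t, p.2)

lemma vseg_adj (p : ℤ × ℤ) : ∀ t : ℕ, SiteAdj (vseg p t) (vseg p (t+1)) := by
  intro t
  show ((vseg p t).1 - (vseg p (t+1)).1).natAbs + ((vseg p t).2 - (vseg p (t+1)).2).natAbs = 1
  have e1 : (vseg p t).1 = p.1 := rfl
  have e2 : (vseg p (t+1)).1 = p.1 := rfl
  have e3 : (vseg p t).2 = p.2 - (t : ℤ) := rfl
  have e4 : (vseg p (t+1)).2 = p.2 - ((t : ℤ) + 1) := by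
    show p.2 - ((t+1 : ℕ) : ℤ) = p.2 - ((t : ℤ) + 1)
    push_cast
    ring
  rw [e1, e2, e3, e4]
  omega

lemma hseg_adj (p : ℤ × ℤ) (c : ℤ) : ∀ t : ℕ, SiteAdj (hseg p c t) (hseg p c (t+1)) := by
  intro t
  show ((hseg p c t).1 - (hseg p c (t+1)).1).natAbs
    + ((hseg p c t).2 - (hseg p c (t+1)).2).natAbs = 1
  have e2 : (hseg p c t).2 = p.2 := rfl
  have e2' : (hseg p c (t+1)).2 = p.2 := rfl
  by_cases h : p.1 ≤ c
  · have e1 : (hseg p c t).1 = p.1 + (t : ℤ) := by unfold hseg; rw [if_pos h]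
    have e1' : (hseg p c (t+1)).1 = p.1 + ((t : ℤ) + 1) := by
      unfold hseg
      rw [if_pos h]
      push_cast
      ring
    rw [e1, e1', e2, e2']
    omega
  · have e1 : (hseg p c t).1 = p.1 - (t : ℤ) := by unfold hseg; rw [if_neg h]
    have e1' : (hseg p c (t+1)).1 = p.1 - ((t : ℤ) + 1) := by
      unfold hseg
      rw [if_neg h]
      push_cast
      ring
    rw [e1, e1', e2, e2']
    omega

/-- An L-shaped path (vertical descent, then horizontal run) inside a set. -/
lemma exists_L (p z : ℤ × ℤ) (hyz : z.2 ≤ p.2) (A : Set (ℤ × ℤ))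
    (hv : ∀ y, z.2 ≤ y → y ≤ p.2 → (p.1, y) ∈ A)
    (hh : ∀ x, min p.1 z.1 ≤ x → x ≤ max p.1 z.1 → (x, z.2) ∈ A) :
    ∃ (nL : ℕ) (fL : ℕ → ℤ × ℤ), fL 0 = p ∧ fL nL = z ∧ (∀ t < nL, SiteAdj (fL t) (fL (t+1))) ∧
      ∀ t ≤ nL, fL t ∈ A := by
  set n1 := (p.2 - z.2).toNat with hn1
  set mid : ℤ × ℤ := (p.1, z.2) with hmid
  set n2 := (z.1 - p.1).natAbs with hn2
  have hv1 : vseg p n1 = mid := by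
    unfold vseg
    simp only [hmid]
    congr 1
    omega
  have hh0 : hseg mid z.1 0 = mid := by
    unfold hseg
    by_cases h : mid.1 ≤ z.1 <;> simp [h]
  have hh2 : hseg mid z.1 n2 = z := by
    unfold hseg
    have : mid.1 = p.1 := rfl
    by_cases h : mid.1 ≤ z.1
    · rw [if_pos h]
      have : z = (z.1, z.2) := rfl
      rw [this]
      congr 1 <;> simp [hmid] at * <;> omega
    · rw [if_neg h]
      have : z = (z.1, z.2) := rfl
      rw [this]
      congr 1 <;> simp [hmid] at * <;> omega
  refine ⟨n1 + n2, cat n1 (vseg p) (hseg mid z.1), ?_, ?_, ?_, ?_⟩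
  · rw [cat_left (Nat.zero_le n1)]
    unfold vseg
    simp
  · rw [cat_right (by rw [hv1, hh0]) n2, hh2]
  · exact cat_adj (by rw [hv1, hh0]) (fun i _ => vseg_adj p i) (fun j _ => hseg_adj mid z.1 j)
  · intro t ht
    rcases cat_sites (f := vseg p) (g := hseg mid z.1) (by rw [hv1, hh0]) t ht with
      ⟨i', hi', he⟩ | ⟨j', hj', he⟩
    · rw [he]
      unfold vseg
      apply hv <;> omega
    · rw [he]
      unfold hseg
      by_cases h : mid.1 ≤ z.1
      · rw [if_pos h]
        apply hh
        · simp only [hmid] at h ⊢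
          omega
        · simp only [hmid] at h hj' ⊢
          omega
      · rw [if_neg h]
        apply hh
        · simp only [hmid] at h hj' ⊢
          omega
        · simp only [hmid] at h ⊢
          omega

/-! ### Infinite concatenation -/

def Ofs (len : ℕ → ℕ) (k : ℕ) : ℕ := ∑ j ∈ Finset.range k, len j

lemma Ofs_succ (len : ℕ → ℕ) (k : ℕ) : Ofs len (k+1) = Ofs len k + len k :=
  Finset.sum_range_succ _ _

lemma Ofs_mono (len : ℕ → ℕ) (hlen : ∀ k, 1 ≤ len k) : ∀ j k, j ≤ k → Ofs len j ≤ Ofs len k := by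
  intro j k hjk
  unfold Ofs
  exact Finset.sum_le_sum_of_subset (Finset.range_subset_range.mpr hjk)

lemma le_Ofs (len : ℕ → ℕ) (hlen : ∀ k, 1 ≤ len k) : ∀ k, k ≤ Ofs len k := by
  intro k
  induction k with
  | zero => simp [Ofs]
  | succ k ih => rw [Ofs_succ]; have := hlen k; omega

def Kidx (len : ℕ → ℕ) (m : ℕ) : ℕ := Nat.findGreatest (fun k => Ofs len k ≤ m) m

lemma Kidx_le (len : ℕ → ℕ) (hlen : ∀ k, 1 ≤ len k) (m : ℕ) :
    Ofs len (Kidx len m) ≤ m := by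
  have h := Nat.findGreatest_spec (P := fun k => Ofs len k ≤ m) (m := 0)
    (Nat.zero_le m) (by simp [Ofs])
  exact h

lemma Kidx_lt (len : ℕ → ℕ) (hlen : ∀ k, 1 ≤ len k) (m : ℕ) :
    m < Ofs len (Kidx len m + 1) := by
  by_contra hcon
  push_neg at hcon
  have h1 : Kidx len m + 1 ≤ m := le_trans (le_Ofs len hlen _) hcon
  have h2 := Nat.findGreatest_is_greatest (P := fun k => Ofs len k ≤ m)
    (Nat.lt_succ_self (Kidx len m)) h1
  exact h2 hcon

lemma Kidx_eq (len : ℕ → ℕ) (hlen : ∀ k, 1 ≤ len k) (k r : ℕ) (hr : r < len k) :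
    Kidx len (Ofs len k + r) = k := by
  set m := Ofs len k + r with hm
  have h1 : Ofs len (Kidx len m) ≤ m := Kidx_le len hlen m
  have h2 : m < Ofs len (Kidx len m + 1) := Kidx_lt len hlen m
  by_contra hne
  rcases Nat.lt_or_ge (Kidx len m) k with h | h
  · have : Ofs len (Kidx len m + 1) ≤ Ofs len k := Ofs_mono len hlen _ _ (by omega)
    omega
  · have hk : k + 1 ≤ Kidx len m := by omega
    have : Ofs len (k+1) ≤ Ofs len (Kidx len m) := Ofs_mono len hlen _ _ hk
    rw [Ofs_succ] at this
    omega

def glue (len : ℕ → ℕ) (seg : ℕ → ℕ → ℤ × ℤ) : ℕ → ℤ × ℤ :=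
  fun m => seg (Kidx len m) (m - Ofs len (Kidx len m))

lemma glue_eq (len : ℕ → ℕ) (hlen : ∀ k, 1 ≤ len k) (seg : ℕ → ℕ → ℤ × ℤ)
    (k r : ℕ) (hr : r < len k) : glue len seg (Ofs len k + r) = seg k r := by
  unfold glue
  rw [Kidx_eq len hlen k r hr]
  congr 1
  omega

lemma glue_zero (len : ℕ → ℕ) (hlen : ∀ k, 1 ≤ len k) (seg : ℕ → ℕ → ℤ × ℤ) :
    glue len seg 0 = seg 0 0 := by
  have := glue_eq len hlen seg 0 0 (hlen 0)
  simpa [Ofs] using this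

lemma glue_adj (len : ℕ → ℕ) (hlen : ∀ k, 1 ≤ len k) (seg : ℕ → ℕ → ℤ × ℤ)
    (hadj : ∀ k i, i < len k → SiteAdj (seg k i) (seg k (i+1)))
    (hglue : ∀ k, seg k (len k) = seg (k+1) 0) :
    ∀ m, SiteAdj (glue len seg m) (glue len seg (m+1)) := by
  intro m
  set K := Kidx len m with hK
  have h1 : Ofs len K ≤ m := Kidx_le len hlen m
  have h2 : m < Ofs len (K + 1) := Kidx_lt len hlen m
  rw [Ofs_succ] at h2
  set r := m - Ofs len K with hr
  have hrlt : r < len K := by omega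
  have hgm : glue len seg m = seg K r := by
    have : m = Ofs len K + r := by omega
    rw [this]
    exact glue_eq len hlen seg K r hrlt
  rcases Nat.lt_or_ge (r+1) (len K) with h | h
  · have hgm1 : glue len seg (m+1) = seg K (r+1) := by
      have : m + 1 = Ofs len K + (r+1) := by omega
      rw [this]
      exact glue_eq len hlen seg K (r+1) h
    rw [hgm, hgm1]
    exact hadj K r hrlt
  · have hre : r + 1 = len K := by omega
    have hgm1 : glue len seg (m+1) = seg (K+1) 0 := by
      have : m + 1 = Ofs len (K+1) + 0 := by rw [Ofs_succ]; omega
      rw [this]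
      exact glue_eq len hlen seg (K+1) 0 (hlen (K+1))
    rw [hgm, hgm1, ← hglue K, ← hre]
    exact hadj K r hrlt

lemma glue_mem (len : ℕ → ℕ) (hlen : ∀ k, 1 ≤ len k) (seg : ℕ → ℕ → ℤ × ℤ) :
    ∀ m, ∃ k r, r ≤ len k ∧ glue len seg m = seg k r := by
  intro m
  have h1 : Ofs len (Kidx len m) ≤ m := Kidx_le len hlen m
  have h2 : m < Ofs len (Kidx len m + 1) := Kidx_lt len hlen m
  rw [Ofs_succ] at h2
  exact ⟨Kidx len m, m - Ofs len (Kidx len m), by omega, rfl⟩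

lemma glue_visits (len : ℕ → ℕ) (hlen : ∀ k, 1 ≤ len k) (seg : ℕ → ℕ → ℤ × ℤ)
    (x : ℤ × ℤ) (k0 : ℕ)
    (hx : ∀ k, k0 ≤ k → ∀ r ≤ len k, seg k r ≠ x) :
    ∀ m, glue len seg m = x → m < Ofs len k0 := by
  intro m hm
  have h1 : Ofs len (Kidx len m) ≤ m := Kidx_le len hlen m
  have h2 : m < Ofs len (Kidx len m + 1) := Kidx_lt len hlen m
  rw [Ofs_succ] at h2
  have hK : Kidx len m < k0 := by
    by_contra hcon
    push_neg at hcon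
    exact hx _ hcon _ (by omega) hm
  calc m < Ofs len (Kidx len m) + len (Kidx len m) := h2
    _ = Ofs len (Kidx len m + 1) := (Ofs_succ len _).symm
    _ ≤ Ofs len k0 := Ofs_mono len hlen _ _ (by omega)

/-! ### Loop erasure -/

lemma loop_erase (g : ℕ → ℤ × ℤ) (hadj : ∀ m, SiteAdj (g m) (g (m+1)))
    (hfin : ∀ x : ℤ × ℤ, {m | g m = x}.Finite) :
    ∃ f : ℕ → ℤ × ℤ, Function.Injective f ∧ f 0 = g 0 ∧
      (∀ n, SiteAdj (f n) (f (n+1))) ∧ ∀ n, ∃ m, f n = g m := by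
  classical
  have hlast : ∀ m0 : ℕ, ∃ t, g t = g m0 ∧ ∀ u, g u = g m0 → u ≤ t := by
    intro m0
    set s := (hfin (g m0)).toFinset with hs
    have hne : s.Nonempty := ⟨m0, by simp [hs]⟩
    refine ⟨s.max' hne, ?_, ?_⟩
    · have := Finset.max'_mem s hne
      simpa [hs] using this
    · intro u hu
      exact Finset.le_max' s u (by simpa [hs] using hu)
  choose T hT1 hT2 using hlast
  set t : ℕ → ℕ := fun n => Nat.rec (T 0) (fun _ prev => T (prev + 1)) n with ht
  have ht0 : t 0 = T 0 := rfl
  have htsucc : ∀ n, t (n+1) = T (t n + 1) := fun n => rfl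
  have hf : ∀ n, g (t n) = (fun n => g (t n)) n := fun n => rfl
  have hval : ∀ n, g (t n) = (if n = 0 then g 0 else g (t (n-1) + 1)) := by
    intro n
    cases n with
    | zero => rw [ht0, if_pos rfl]; exact hT1 0
    | succ n => rw [htsucc, if_neg (by omega)]; simpa using hT1 (t n + 1)
  have hmax : ∀ n u, g u = g (t n) → u ≤ t n := by
    intro n u hu
    cases n with
    | zero =>
      rw [ht0]
      apply hT2 0
      rw [hu, ht0]
      exact hT1 0
    | succ n =>
      rw [htsucc]
      apply hT2 (t n + 1)
      rw [hu, htsucc]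
      exact hT1 (t n + 1)
  have hmono : ∀ n, t n < t (n+1) := by
    intro n
    rw [htsucc]
    have := hT2 (t n + 1) (t n + 1) rfl
    omega
  have hstrict : StrictMono t := strictMono_nat_of_lt_succ hmono
  refine ⟨fun n => g (t n), ?_, ?_, ?_, fun n => ⟨t n, rfl⟩⟩
  · intro a b hab
    simp only [] at hab
    by_contra hne
    rcases Nat.lt_or_ge a b with h | h
    · have h1 : t a < t b := hstrict h
      have := hmax a (t b) hab.symm
      omega
    · have h' : b < a := by omega
      have h1 : t b < t a := hstrict h'
      have := hmax b (t a) hab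
      omega
  · show g (t 0) = g 0
    have := hval 0
    simpa using this
  · intro n
    show SiteAdj (g (t n)) (g (t (n+1)))
    have e : g (t (n+1)) = g (t n + 1) := by
      have := hval (n+1)
      simpa using this
    rw [e]
    exact hadj (t n)



lemma adj_dx {p q : ℤ × ℤ} (h : SiteAdj p q) : ((q.1 - p.1)).natAbs ≤ 1 := by
  unfold SiteAdj at h; omega

lemma adj_dy {p q : ℤ × ℤ} (h : SiteAdj p q) : ((q.2 - p.2)).natAbs ≤ 1 := by
  unfold SiteAdj at h; omega

/-- Junction lemma: a path `h` whose `x`-extent covers `[c1,c2]` and whose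
`y`-coordinates stay in `[yb1,yb2]`, and a path `v` whose `x`-coordinates stay
in `[c1,c2]` and whose `y`-extent covers `[yb1,yb2]`, must meet. -/
lemma meet_band (c1 c2 yb1 yb2 : ℤ) (hc : c1 ≤ c2) (hyb : yb1 ≤ yb2)
    (h : ℕ → ℤ × ℤ) (mh : ℕ)
    (hadj : ∀ i < mh, SiteAdj (h i) (h (i+1)))
    (hmemh : ∀ i ≤ mh, yb1 ≤ (h i).2 ∧ (h i).2 ≤ yb2)
    (h1 : (h 0).1 ≤ c1) (h2 : c2 ≤ (h mh).1)
    (v : ℕ → ℤ × ℤ) (n : ℕ)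
    (vadj : ∀ j < n, SiteAdj (v j) (v (j+1)))
    (hmemv : ∀ j ≤ n, c1 ≤ (v j).1 ∧ (v j).1 ≤ c2)
    (v1 : (v 0).2 ≤ yb1) (v2 : yb2 ≤ (v n).2) :
    ∃ i ≤ mh, ∃ j ≤ n, h i = v j := by
  obtain ⟨s, t, hst, htm, hgs, hgt, hwin⟩ := subseg (fun i => (h i).1) mh
    (fun i hi => adj_dx (hadj i hi)) c1 c2 hc h1 h2
  obtain ⟨s', t', hst', htn', hgs', hgt', hwin'⟩ := subseg (fun j => (v j).2) n
    (fun j hj => adj_dy (vadj j hj)) yb1 yb2 hyb v1 v2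
  have hmeet := cross_meet c1 c2 yb1 yb2 (fun u => h (s + u)) (t - s)
    (fun i hi => by
      show SiteAdj (h (s + i)) (h (s + (i+1)))
      have := hadj (s + i) (by omega)
      have e : s + (i + 1) = s + i + 1 := by omega
      rw [e]
      exact this)
    (fun i hi => by
      have hw := hwin (s + i) (by omega) (by omega)
      have hy := hmemh (s + i) (by omega)
      exact ⟨hw.1, hw.2, hy.1, hy.2⟩)
    (by show (h (s + 0)).1 = c1
        rw [show s + 0 = s from rfl]; exact hgs)
    (by show (h (s + (t - s))).1 = c2
        rw [show s + (t - s) = t by omega]; exact hgt)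
    (fun u => v (s' + u)) (t' - s')
    (fun j hj => by
      show SiteAdj (v (s' + j)) (v (s' + (j+1)))
      have := vadj (s' + j) (by omega)
      have e : s' + (j + 1) = s' + j + 1 := by omega
      rw [e]
      exact this)
    (fun j hj => by
      have hw := hwin' (s' + j) (by omega) (by omega)
      have hx := hmemv (s' + j) (by omega)
      exact ⟨hx.1, hx.2, hw.1, hw.2⟩)
    (by show (v (s' + 0)).2 = yb1
        rw [show s' + 0 = s' from rfl]; exact hgs')
    (by show (v (s' + (t' - s'))).2 = yb2
        rw [show s' + (t' - s') = t' by omega]; exact hgt')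
  obtain ⟨i, hi, j, hj, heq⟩ := hmeet
  exact ⟨s + i, by omega, s' + j, by omega, heq⟩


lemma s_cast (W : Window) :
    ((W.s : ℤ)) = (W.q : ℤ) * (W.l : ℤ) + ((W.q : ℤ) - 1) * (W.d : ℤ) := by
  have h1 : 1 ≤ W.q := by have := W.hq; omega
  unfold Window.s
  rw [Nat.cast_add, Nat.cast_mul, Nat.cast_mul, Nat.cast_sub h1, Nat.cast_one]

lemma window_facts (W : Window) : (1:ℤ) ≤ (W.l:ℤ) ∧ (1:ℤ) ≤ (W.d:ℤ) ∧ (2:ℤ) ≤ (W.q:ℤ) := by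
  have h1 := W.hl
  have h2 := W.hd
  have h3 := W.hq
  refine ⟨?_, ?_, ?_⟩ <;> exact_mod_cast (by omega)

lemma s_lb (W : Window) : 2 * (W.l:ℤ) + (W.d:ℤ) ≤ (W.s:ℤ) := by
  obtain ⟨hl, hd, hq⟩ := window_facts W
  rw [s_cast]
  nlinarith

/-- All the geometric information we need about a point of the fork. -/
lemma fork_pts (W : Window) (p : ℤ × ℤ) (hp : p ∈ W.fork) :
    (W.a + (W.l:ℤ) ≤ p.1) ∧ (p.1 ≤ W.a + (W.s:ℤ) - 1) ∧ (W.b ≤ p.2) ∧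
    (p.2 ≤ W.b + (W.s:ℤ) - (W.l:ℤ) - 1) ∧
    ∀ y, W.b ≤ y → y ≤ p.2 → (p.1, y) ∈ W.fork := by
  obtain ⟨hl, hd, hq⟩ := window_facts W
  have hsc := s_cast W
  have hslb := s_lb W
  obtain ⟨hin, hout⟩ := hp
  have hV0 : p ∉ W.V 0 := fun h => hout (Or.inl h)
  have hHtop : p ∉ W.Hf (W.q - 1) := fun h => hout (Or.inr h)
  have hq1 : 1 ≤ W.q := by have := W.hq; omega
  have hcast_top : ((((W.q - 1) * (W.l + W.d) : ℕ)) : ℤ)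
      = ((W.q:ℤ) - 1) * ((W.l:ℤ) + (W.d:ℤ)) := by
    push_cast [Nat.cast_sub hq1]
    ring
  have hcast_zero : (((0 * (W.l + W.d) : ℕ)) : ℤ) = 0 := by push_cast; ring
  have htop_eq : ((W.q:ℤ) - 1) * ((W.l:ℤ) + (W.d:ℤ)) = (W.s:ℤ) - (W.l:ℤ) := by
    rw [hsc]; ring
  rcases hin with hV | hH
  · -- p is in a vertical frame V j, 1 ≤ j < q
    simp only [Set.mem_iUnion] at hV
    obtain ⟨j, hj, hpj⟩ := hV
    simp only [Set.mem_Ico] at hj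
    obtain ⟨hj1, hj2⟩ := hj
    have hjZ1 : (1:ℤ) ≤ (j:ℤ) := by exact_mod_cast hj1
    have hjZ2 : (j:ℤ) ≤ (W.q:ℤ) - 1 := by
      have : (j:ℤ) < (W.q:ℤ) := by exact_mod_cast hj2
      omega
    obtain ⟨m1, m2, m3, m4⟩ := hpj
    have hcastj : (((j * (W.l + W.d) : ℕ)) : ℤ) = (j:ℤ) * ((W.l:ℤ) + (W.d:ℤ)) := by
      push_cast; ring
    rw [hcastj] at m1 m2
    have key1 : (W.l:ℤ) + (W.d:ℤ) ≤ (j:ℤ) * ((W.l:ℤ) + (W.d:ℤ)) := by nlinarith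
    have key2 : (j:ℤ) * ((W.l:ℤ) + (W.d:ℤ)) + (W.l:ℤ) ≤ (W.s:ℤ) := by nlinarith
    have c1 : W.a + (W.l:ℤ) ≤ p.1 := by linarith
    have c2 : p.1 ≤ W.a + (W.s:ℤ) - 1 := by linarith
    have c4 : p.2 ≤ W.b + (W.s:ℤ) - (W.l:ℤ) - 1 := by
      by_contra hc
      push_neg at hc
      apply hHtop
      refine ⟨by linarith, by linarith, ?_, ?_⟩ <;>
        rw [hcast_top, htop_eq] <;> linarith
    refine ⟨c1, c2, m3, c4, ?_⟩
    intro y hy1 hy2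
    constructor
    · left
      simp only [Set.mem_iUnion]
      refine ⟨j, Set.mem_Ico.mpr ⟨hj1, hj2⟩, ?_⟩
      refine ⟨?_, ?_, ?_, ?_⟩
      · show W.a + _ ≤ p.1
        rw [hcastj]; exact m1
      · show p.1 ≤ W.a + _ + (W.l:ℤ) - 1
        rw [hcastj]; exact m2
      · exact hy1
      · show y ≤ W.b + (W.s:ℤ) - 1
        linarith
    · intro hmem
      rcases hmem with h0 | ht
      · obtain ⟨n1, n2, n3, n4⟩ := h0
        rw [hcast_zero] at n2
        simp only at n2
        linarith
      · obtain ⟨n1, n2, n3, n4⟩ := ht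
        rw [hcast_top, htop_eq] at n3
        simp only at n3
        linarith
  · -- p is in the bottom frame H 0
    obtain ⟨m1, m2, m3, m4⟩ := hH
    rw [hcast_zero] at m3 m4
    simp only [add_zero] at m3 m4
    have c1 : W.a + (W.l:ℤ) ≤ p.1 := by
      by_contra hc
      push_neg at hc
      apply hV0
      refine ⟨?_, ?_, ?_, ?_⟩
      · show W.a + ((0 * (W.l + W.d) : ℕ) : ℤ) ≤ p.1
        rw [hcast_zero]
        simp only [add_zero]
        exact m1
      · show p.1 ≤ W.a + ((0 * (W.l + W.d) : ℕ) : ℤ) + (W.l:ℤ) - 1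
        rw [hcast_zero]
        simp only [add_zero]
        linarith
      · linarith
      · show p.2 ≤ W.b + (W.s:ℤ) - 1
        linarith
    refine ⟨c1, m2, m3, by linarith, ?_⟩
    intro y hy1 hy2
    constructor
    · right
      refine ⟨m1, m2, ?_, ?_⟩
      · show W.b + ((0 * (W.l + W.d) : ℕ) : ℤ) ≤ y
        rw [hcast_zero]; simp only [add_zero]; exact hy1
      · show y ≤ W.b + ((0 * (W.l + W.d) : ℕ) : ℤ) + (W.l:ℤ) - 1
        rw [hcast_zero]; simp only [add_zero]; linarith
    · intro hmem
      rcases hmem with h0 | ht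
      · obtain ⟨n1, n2, n3, n4⟩ := h0
        rw [hcast_zero] at n2
        simp only [add_zero] at n2
        linarith
      · obtain ⟨n1, n2, n3, n4⟩ := ht
        rw [hcast_top, htop_eq] at n3
        simp only at n3
        linarith

end Road

set_option maxHeartbeats 3200000 in
/-- Given a chain `W_1 ≺ W_2 ≺ ⋯` of windows, if a set `S` of
open sites contains all of `ERB_1`, and for each `k ≥ 2` contains a vertical
crossing of the cut-frame of `ERB_k` and a horizontal crossing of the extended
bottom of `ERB_k`, then from every point of the fork `F(W_1)` there is an
infinite self-avoiding open path to infinity inside `⋃_{k≥1} ERB_k`. -/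
theorem road_gives_infinite_path (W : ℕ → Window) (I J : ℕ → ℕ)
    (hchain : ∀ k, 1 ≤ k → (W k).Prec (W (k + 1)) (I k) (J k))
    (S : Set (ℤ × ℤ))
    (hERB1 : ERB W I 1 ⊆ S)
    (hv : ∀ k, 2 ≤ k →
      VCross S ((W k).a + ((I (k - 1) + 1) * ((W k).l + (W k).d) : ℕ))
        ((W k).a + ((I (k - 1) + 1) * ((W k).l + (W k).d) : ℕ) + (W k).l - 1)
        ((W k).b) ((W k).b + (W k).s - (W k).l - 1))
    (hh : ∀ k, 2 ≤ k →
      HCross S ((W k).a + (W k).l) ((W k).a + (W k).s - 1 + (W (k + 1)).l)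
        ((W k).b) ((W k).b + (W k).l - 1)) :
    ∀ p ∈ (W 1).fork, ∃ f : ℕ → ℤ × ℤ, Function.Injective f ∧ f 0 = p ∧
      (∀ n, SiteAdj (f n) (f (n + 1))) ∧
      ∀ n, f n ∈ S ∧ ∃ k, 1 ≤ k ∧ f n ∈ ERB W I k := by
  intro p hp
  classical
  -- integer facts about each window
  have hWf : ∀ k : ℕ, (1:ℤ) ≤ ((W k).l:ℤ) ∧ (1:ℤ) ≤ ((W k).d:ℤ) ∧ (2:ℤ) ≤ ((W k).q:ℤ) :=
    fun k => Road.window_facts (W k)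
  have hsc : ∀ k : ℕ, (((W k).s : ℤ))
      = ((W k).q : ℤ) * ((W k).l : ℤ) + (((W k).q : ℤ) - 1) * ((W k).d : ℤ) :=
    fun k => Road.s_cast (W k)
  have hslb : ∀ k : ℕ, 2 * ((W k).l:ℤ) + ((W k).d:ℤ) ≤ ((W k).s:ℤ) :=
    fun k => Road.s_lb (W k)
  -- chain facts in ℤ
  have chainZ : ∀ k, 1 ≤ k →
      ((I k : ℤ) + 2 ≤ ((W (k+1)).q : ℤ)) ∧
      ((J k : ℤ) + 2 ≤ ((W (k+1)).q : ℤ)) ∧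
      (((W k).s : ℤ) = ((W (k+1)).d : ℤ)) ∧
      ((W k).a = (W (k+1)).a + (I k : ℤ) * (((W (k+1)).l:ℤ) + ((W (k+1)).d:ℤ))
        + ((W (k+1)).l:ℤ)) ∧
      ((W k).b = (W (k+1)).b + (J k : ℤ) * (((W (k+1)).l:ℤ) + ((W (k+1)).d:ℤ))
        + ((W (k+1)).l:ℤ)) := by
    intro k hk
    obtain ⟨h1, h2, h3, h4, h5⟩ := hchain k hk
    refine ⟨?_, ?_, ?_, ?_, ?_⟩
    · have : ((I k : ℤ) + 1) < ((W (k+1)).q : ℤ) := by exact_mod_cast h1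
      omega
    · have : ((J k : ℤ) + 1) < ((W (k+1)).q : ℤ) := by exact_mod_cast h2
      omega
    · exact_mod_cast congrArg (Nat.cast : ℕ → ℤ) h3
    · rw [h4]; push_cast; ring
    · rw [h5]; push_cast; ring
  -- the left edge of the cut frame of W (k+1) equals the right edge of W k
  have lft_eq : ∀ k, 1 ≤ k →
      (W (k+1)).a + ((I k : ℤ) + 1) * (((W (k+1)).l:ℤ) + ((W (k+1)).d:ℤ))
        = (W k).a + ((W k).s : ℤ) := by
    intro k hk
    obtain ⟨_, _, h3, h4, _⟩ := chainZ k hk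
    have hexp : ((I k:ℤ)+1) * (((W (k+1)).l:ℤ) + ((W (k+1)).d:ℤ))
        = (I k:ℤ) * (((W (k+1)).l:ℤ) + ((W (k+1)).d:ℤ))
          + (((W (k+1)).l:ℤ) + ((W (k+1)).d:ℤ)) := by ring
    rw [hexp]
    linarith
  have M_step : ∀ k, 1 ≤ k →
      (W k).a + ((W k).s:ℤ) + ((W (k+1)).l:ℤ) ≤ (W (k+1)).a + ((W (k+1)).s:ℤ) := by
    intro k hk
    obtain ⟨h1, _, h3, h4, _⟩ := chainZ k hk
    obtain ⟨hl, hd, hq⟩ := hWf (k+1)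
    rw [← lft_eq k hk]
    have hqI : 0 ≤ ((W (k+1)).q:ℤ) - (I k:ℤ) - 2 := by omega
    have := hsc (k+1)
    nlinarith [mul_nonneg hqI (by linarith : (0:ℤ) ≤ ((W (k+1)).l:ℤ) + ((W (k+1)).d:ℤ))]
  have B_step : ∀ k, 1 ≤ k → (W (k+1)).b + ((W (k+1)).l:ℤ) ≤ (W k).b := by
    intro k hk
    obtain ⟨_, _, _, _, h5⟩ := chainZ k hk
    obtain ⟨hl, hd, _⟩ := hWf (k+1)
    have hJ : (0:ℤ) ≤ (J k : ℤ) := Int.natCast_nonneg _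
    nlinarith [mul_nonneg hJ (by linarith : (0:ℤ) ≤ ((W (k+1)).l:ℤ) + ((W (k+1)).d:ℤ))]
  have B_lin : ∀ k : ℕ, (W (k+1)).b + (k:ℤ) ≤ (W 1).b := by
    intro k
    induction k with
    | zero => simp
    | succ k ih =>
      have h1 := B_step (k+1) (by omega)
      have h2 := (hWf (k+2)).1
      push_cast
      push_cast at ih
      linarith
  have M_lin : ∀ k : ℕ, (W 1).a + ((W 1).s:ℤ) + (k:ℤ) ≤ (W (k+1)).a + ((W (k+1)).s:ℤ) := by
    intro k
    induction k with
    | zero => simp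
    | succ k ih =>
      have h1 := M_step (k+1) (by omega)
      have h2 := (hWf (k+2)).1
      push_cast
      push_cast at ih
      linarith
  -- extract the vertical crossings
  have hvdata : ∀ k : ℕ, ∃ (m : ℕ) (g : ℕ → ℤ × ℤ), 2 ≤ k →
      (∀ i ≤ m, g i ∈ S ∧ g i ∈ cutRect (W k) (I (k-1))) ∧
      (∀ i < m, SiteAdj (g i) (g (i+1))) ∧
      (g 0).2 = (W k).b ∧ (g m).2 = (W k).b + ((W k).s:ℤ) - ((W k).l:ℤ) - 1 := by
    intro k
    by_cases hk : 2 ≤ k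
    · obtain ⟨m, g, h1, h2, h3, h4⟩ := Road.vcross_elim (hv k hk)
      exact ⟨m, g, fun _ => ⟨h1, h2, h3, h4⟩⟩
    · exact ⟨0, fun _ => (0,0), fun h => absurd h hk⟩
  choose vm vf hvp using hvdata
  have hhdata : ∀ k : ℕ, ∃ (m : ℕ) (g : ℕ → ℤ × ℤ), 2 ≤ k →
      (∀ i ≤ m, g i ∈ S ∧ g i ∈ botRect (W k) ((W (k+1)).l)) ∧
      (∀ i < m, SiteAdj (g i) (g (i+1))) ∧
      (g 0).1 = (W k).a + ((W k).l:ℤ) ∧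
      (g m).1 = (W k).a + ((W k).s:ℤ) - 1 + ((W (k+1)).l:ℤ) := by
    intro k
    by_cases hk : 2 ≤ k
    · obtain ⟨m, g, h1, h2, h3, h4⟩ := Road.hcross_elim (hh k hk)
      exact ⟨m, g, fun _ => ⟨h1, h2, h3, h4⟩⟩
    · exact ⟨0, fun _ => (0,0), fun h => absurd h hk⟩
  choose hm hf hhp using hhdata
  -- membership facts in ℤ form
  have cut_mem : ∀ k, 2 ≤ k → ∀ i ≤ vm k,
      (W k).a + ((I (k-1):ℤ)+1) * (((W k).l:ℤ)+((W k).d:ℤ)) ≤ (vf k i).1 ∧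
      (vf k i).1 ≤ (W k).a + ((I (k-1):ℤ)+1) * (((W k).l:ℤ)+((W k).d:ℤ)) + ((W k).l:ℤ) - 1 ∧
      (W k).b ≤ (vf k i).2 ∧ (vf k i).2 ≤ (W k).b + ((W k).s:ℤ) - ((W k).l:ℤ) - 1 := by
    intro k hk i hi
    obtain ⟨a1, a2, a3, a4⟩ := ((hvp k hk).1 i hi).2
    have e : ((((I (k-1) + 1) * ((W k).l + (W k).d) : ℕ)) : ℤ)
        = ((I (k-1):ℤ)+1) * (((W k).l:ℤ)+((W k).d:ℤ)) := by push_cast; ring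
    rw [e] at a1 a2
    exact ⟨a1, a2, a3, a4⟩
  have bot_mem : ∀ k, 2 ≤ k → ∀ i ≤ hm k,
      (W k).a + ((W k).l:ℤ) ≤ (hf k i).1 ∧
      (hf k i).1 ≤ (W k).a + ((W k).s:ℤ) - 1 + ((W (k+1)).l:ℤ) ∧
      (W k).b ≤ (hf k i).2 ∧ (hf k i).2 ≤ (W k).b + ((W k).l:ℤ) - 1 := by
    intro k hk i hi
    exact ((hhp k hk).1 i hi).2
  -- junction of the cut-frame crossing and the extended-bottom crossing of W k
  have hjA : ∀ k : ℕ, ∃ (w u : ℕ), 2 ≤ k →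
      w ≤ hm k ∧ u ≤ vm k ∧ hf k w = vf k u := by
    intro k
    by_cases hk : 2 ≤ k
    · obtain ⟨hl, hd, hq⟩ := hWf k
      obtain ⟨hl', hd', hq'⟩ := hWf (k+1)
      have hI0 : (0:ℤ) ≤ (I (k-1) : ℤ) := Int.natCast_nonneg _
      have hck := chainZ (k-1) (by omega)
      rw [show k - 1 + 1 = k from by omega] at hck
      obtain ⟨hcq, -, -, -, -⟩ := hck
      have hmeet := Road.meet_band
        ((W k).a + ((I (k-1):ℤ)+1) * (((W k).l:ℤ)+((W k).d:ℤ)))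
        ((W k).a + ((I (k-1):ℤ)+1) * (((W k).l:ℤ)+((W k).d:ℤ)) + ((W k).l:ℤ) - 1)
        ((W k).b) ((W k).b + ((W k).l:ℤ) - 1)
        (by linarith) (by linarith)
        (hf k) (hm k) ((hhp k hk).2.1)
        (fun i hi => ⟨(bot_mem k hk i hi).2.2.1, (bot_mem k hk i hi).2.2.2⟩)
        (by
          rw [(hhp k hk).2.2.1]
          nlinarith [mul_nonneg hI0 (by linarith : (0:ℤ) ≤ ((W k).l:ℤ)+((W k).d:ℤ))])
        (by
          rw [(hhp k hk).2.2.2]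
          have hqI : 0 ≤ ((W k).q:ℤ) - (I (k-1):ℤ) - 2 := by omega
          have := hsc k
          nlinarith [mul_nonneg hqI (by linarith : (0:ℤ) ≤ ((W k).l:ℤ)+((W k).d:ℤ))])
        (vf k) (vm k) ((hvp k hk).2.1)
        (fun j hj => ⟨(cut_mem k hk j hj).1, (cut_mem k hk j hj).2.1⟩)
        (by rw [(hvp k hk).2.2.1])
        (by
          rw [(hvp k hk).2.2.2]
          have := hslb k
          linarith)
      obtain ⟨i, hi, j, hj, he⟩ := hmeet
      exact ⟨i, j, fun _ => ⟨hi, hj, he⟩⟩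
    · exact ⟨0, 0, fun h => absurd h hk⟩
  choose wA uA hjAp using hjA
  -- junction of the extended bottom of W k and the cut-frame crossing of W (k+1)
  have hjB : ∀ k : ℕ, ∃ (w u : ℕ), 2 ≤ k →
      w ≤ hm k ∧ u ≤ vm (k+1) ∧ hf k w = vf (k+1) u := by
    intro k
    by_cases hk : 2 ≤ k
    · obtain ⟨hl, hd, hq⟩ := hWf k
      obtain ⟨hl', hd', hq'⟩ := hWf (k+1)
      have hck := chainZ k (by omega)
      obtain ⟨-, hcq, hcs, -, hcb⟩ := hck
      have hJ0 : (0:ℤ) ≤ (J k : ℤ) := Int.natCast_nonneg _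
      have cut_mem' : ∀ j ≤ vm (k+1),
          (W k).a + ((W k).s:ℤ) ≤ (vf (k+1) j).1 ∧
          (vf (k+1) j).1 ≤ (W k).a + ((W k).s:ℤ) + ((W (k+1)).l:ℤ) - 1 := by
        intro j hj
        have hcm := cut_mem (k+1) (by omega) j hj
        rw [show k + 1 - 1 = k from rfl] at hcm
        rw [lft_eq k (by omega)] at hcm
        exact ⟨hcm.1, by linarith [hcm.2.1]⟩
      have hmeet := Road.meet_band
        ((W k).a + ((W k).s:ℤ))
        ((W k).a + ((W k).s:ℤ) + ((W (k+1)).l:ℤ) - 1)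
        ((W k).b) ((W k).b + ((W k).l:ℤ) - 1)
        (by linarith) (by linarith)
        (hf k) (hm k) ((hhp k hk).2.1)
        (fun i hi => ⟨(bot_mem k hk i hi).2.2.1, (bot_mem k hk i hi).2.2.2⟩)
        (by
          rw [(hhp k hk).2.2.1]
          have := hslb k
          linarith)
        (by
          rw [(hhp k hk).2.2.2]
          linarith)
        (vf (k+1)) (vm (k+1)) ((hvp (k+1) (by omega)).2.1)
        (fun j hj => cut_mem' j hj)
        (by
          rw [(hvp (k+1) (by omega)).2.2.1]
          have := B_step k (by omega)
          linarith)
        (by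
          rw [(hvp (k+1) (by omega)).2.2.2]
          have hqJ : 0 ≤ ((W (k+1)).q:ℤ) - (J k:ℤ) - 2 := by omega
          have h1 := hsc (k+1)
          have h2 := hslb k
          nlinarith [mul_nonneg hqJ
            (by linarith : (0:ℤ) ≤ ((W (k+1)).l:ℤ)+((W (k+1)).d:ℤ))])
      obtain ⟨i, hi, j, hj, he⟩ := hmeet
      exact ⟨i, j, fun _ => ⟨hi, hj, he⟩⟩
    · exact ⟨0, 0, fun h => absurd h hk⟩
  choose wB uB hjBp using hjB
  -- entry point: where the cut-frame crossing of W 2 reaches height b₁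
  have hent : ∃ i ≤ vm 2, (vf 2 i).2 = (W 1).b := by
    obtain ⟨hl', hd', hq'⟩ := hWf 2
    obtain ⟨-, hcq, hcs, -, hcb⟩ := chainZ 1 (by omega)
    norm_num at hcq hcs hcb
    have hJ0 : (0:ℤ) ≤ (J 1 : ℤ) := Int.natCast_nonneg _
    obtain ⟨i, hi, he⟩ := Road.ivt (fun i => (vf 2 i).2) (vm 2)
      (fun i hi => Road.adj_dy ((hvp 2 (by omega)).2.1 i hi)) ((W 1).b)
      (by
        show (vf 2 0).2 ≤ (W 1).b
        rw [(hvp 2 (by omega)).2.2.1]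
        nlinarith [mul_nonneg hJ0 (by linarith : (0:ℤ) ≤ ((W 2).l:ℤ)+((W 2).d:ℤ))])
      (by
        show (W 1).b ≤ (vf 2 (vm 2)).2
        rw [(hvp 2 (by omega)).2.2.2]
        have hqJ : 0 ≤ ((W 2).q:ℤ) - (J 1:ℤ) - 2 := by omega
        have h1 := hsc 2
        nlinarith [mul_nonneg hqJ (by linarith : (0:ℤ) ≤ ((W 2).l:ℤ)+((W 2).d:ℤ))])
    exact ⟨i, hi, he⟩
  obtain ⟨i2, hi2le, hi2y⟩ := hent
  -- facts about the entry point z = vf 2 i2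
  have hcut2 := cut_mem 2 (by omega) i2 hi2le
  rw [show (2:ℕ) - 1 = 1 from rfl] at hcut2
  have hlft2 := lft_eq 1 (by omega)
  norm_num at hlft2
  rw [hlft2] at hcut2
  have hforkp := Road.fork_pts (W 1) p hp
  have hERB1eq : ERB W I 1 = (W 1).fork ∪ botRect (W 1) ((W 2).l) := by
    unfold ERB
    rw [if_pos rfl]
  obtain ⟨hl1, hd1, hq1⟩ := hWf 1
  obtain ⟨hl2, hd2, hq2⟩ := hWf 2
  have hslb1 := hslb 1
  -- the path through ERB 1 from p to the entry point
  obtain ⟨nE, fE, hE0, hEn, hEadj, hEmem⟩ := Road.exists_L p (vf 2 i2)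
    (by rw [hi2y]; exact hforkp.2.2.1) (ERB W I 1)
    (by
      intro y hy1 hy2
      rw [hERB1eq]
      left
      exact hforkp.2.2.2.2 y (by rw [hi2y] at hy1; exact hy1) hy2)
    (by
      intro x hx1 hx2
      rw [hERB1eq]
      right
      have hmin : (W 1).a + ((W 1).l:ℤ) ≤ min p.1 (vf 2 i2).1 :=
        le_min hforkp.1 (by linarith [hcut2.1])
      have hmax : max p.1 (vf 2 i2).1 ≤ (W 1).a + ((W 1).s:ℤ) - 1 + ((W 2).l:ℤ) :=
        max_le (by linarith [hforkp.2.1]) (by linarith [hcut2.2.1])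
      refine ⟨by linarith, by linarith, by rw [hi2y], by rw [hi2y]; linarith⟩)
  -- the infinite sequence of path segments
  obtain ⟨t1, ht1⟩ : ∃ t1, t1 = Road.tlen i2 (uA 2) := ⟨_, rfl⟩
  obtain ⟨t2, ht2⟩ : ∃ t2, t2 = Road.tlen (wA 2) (wB 2) := ⟨_, rfl⟩
  obtain ⟨seg, hseg0, hsegk⟩ : ∃ seg : ℕ → ℕ → ℤ × ℤ,
      (seg 0 = Road.cat nE fE (Road.cat t1 (Road.trav (vf 2) i2 (uA 2))
        (Road.trav (hf 2) (wA 2) (wB 2)))) ∧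
      (∀ k : ℕ, seg (k+1) = Road.cat (Road.tlen (uB (k+2)) (uA (k+3)))
        (Road.trav (vf (k+3)) (uB (k+2)) (uA (k+3)))
        (Road.trav (hf (k+3)) (wA (k+3)) (wB (k+3)))) :=
    ⟨fun k => Nat.casesOn k
      (Road.cat nE fE (Road.cat t1 (Road.trav (vf 2) i2 (uA 2))
        (Road.trav (hf 2) (wA 2) (wB 2))))
      (fun k' => Road.cat (Road.tlen (uB (k'+2)) (uA (k'+3)))
        (Road.trav (vf (k'+3)) (uB (k'+2)) (uA (k'+3)))
        (Road.trav (hf (k'+3)) (wA (k'+3)) (wB (k'+3)))), rfl, fun _ => rfl⟩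
  obtain ⟨len, hlen0, hlenk⟩ : ∃ len : ℕ → ℕ,
      (len 0 = nE + (t1 + t2)) ∧
      (∀ k : ℕ, len (k+1)
        = Road.tlen (uB (k+2)) (uA (k+3)) + Road.tlen (wA (k+3)) (wB (k+3))) :=
    ⟨fun k => Nat.casesOn k (nE + (t1 + t2))
      (fun k' => Road.tlen (uB (k'+2)) (uA (k'+3)) + Road.tlen (wA (k'+3)) (wB (k'+3))),
      rfl, fun _ => rfl⟩
  have tlen_zero : ∀ i j : ℕ, Road.tlen i j = 0 → i = j := by
    intro i j h
    unfold Road.tlen at h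
    split at h <;> omega
  -- the two junction points of stage k are distinct
  have hABne : ∀ m, 2 ≤ m → hf m (wA m) ≠ hf m (wB m) := by
    intro m hmge hcon
    obtain ⟨hwAm, huAm, heA⟩ := hjAp m hmge
    obtain ⟨hwBm, huBm, heB⟩ := hjBp m hmge
    have h1 := cut_mem m hmge (uA m) huAm
    have h2 := cut_mem (m+1) (by omega) (uB m) huBm
    rw [show m + 1 - 1 = m from rfl] at h2
    rw [lft_eq m (by omega)] at h2
    have hlftm := lft_eq (m-1) (by omega)
    rw [show m - 1 + 1 = m from by omega] at hlftm
    rw [hlftm] at h1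
    have hM := M_step (m-1) (by omega)
    rw [show m - 1 + 1 = m from by omega] at hM
    have hx1 : (hf m (wA m)).1 ≤ (W (m-1)).a + ((W (m-1)).s:ℤ) + ((W m).l:ℤ) - 1 := by
      rw [heA]
      exact h1.2.1
    have hx2 : (W m).a + ((W m).s:ℤ) ≤ (hf m (wB m)).1 := by
      rw [heB]
      exact h2.1
    rw [hcon] at hx1
    linarith
  have hlenge : ∀ k, 1 ≤ len k := by
    intro k
    cases k with
    | zero =>
      rw [hlen0]
      have h2' : Road.tlen (wA 2) (wB 2) ≠ 0 :=
        fun h => hABne 2 (by omega) (by rw [tlen_zero _ _ h])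
      omega
    | succ k =>
      rw [hlenk k]
      have : Road.tlen (wA (k+3)) (wB (k+3)) ≠ 0 :=
        fun h => hABne (k+3) (by omega) (by rw [tlen_zero _ _ h])
      omega
  -- adjacency within each segment
  have einner : Road.trav (vf 2) i2 (uA 2) t1 = Road.trav (hf 2) (wA 2) (wB 2) 0 := by
    rw [ht1, Road.trav_last, Road.trav_zero]
    exact ((hjAp 2 (by omega)).2.2).symm
  have eouter : fE nE = Road.cat t1 (Road.trav (vf 2) i2 (uA 2))
      (Road.trav (hf 2) (wA 2) (wB 2)) 0 := by
    rw [Road.cat_left (Nat.zero_le t1), Road.trav_zero]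
    exact hEn
  have einnerk : ∀ k : ℕ,
      Road.trav (vf (k+3)) (uB (k+2)) (uA (k+3)) (Road.tlen (uB (k+2)) (uA (k+3)))
        = Road.trav (hf (k+3)) (wA (k+3)) (wB (k+3)) 0 := by
    intro k
    rw [Road.trav_last, Road.trav_zero]
    exact ((hjAp (k+3) (by omega)).2.2).symm
  have hsegadj : ∀ k i, i < len k → SiteAdj (seg k i) (seg k (i+1)) := by
    intro k i hi
    cases k with
    | zero =>
      rw [hlen0] at hi
      rw [hseg0]
      refine Road.cat_adj eouter hEadj ?_ i hi
      rw [ht2]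
      refine Road.cat_adj einner ?_ ?_
      · rw [ht1]
        exact Road.trav_adj (vf 2) (vm 2) i2 (uA 2) hi2le (hjAp 2 (by omega)).2.1
          ((hvp 2 (by omega)).2.1)
      · exact Road.trav_adj (hf 2) (hm 2) (wA 2) (wB 2) (hjAp 2 (by omega)).1
          (hjBp 2 (by omega)).1 ((hhp 2 (by omega)).2.1)
    | succ k =>
      rw [hlenk k] at hi
      rw [hsegk k]
      refine Road.cat_adj (einnerk k) ?_ ?_ i hi
      · exact Road.trav_adj (vf (k+3)) (vm (k+3)) (uB (k+2)) (uA (k+3))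
          (hjBp (k+2) (by omega)).2.1 (hjAp (k+3) (by omega)).2.1
          ((hvp (k+3) (by omega)).2.1)
      · exact Road.trav_adj (hf (k+3)) (hm (k+3)) (wA (k+3)) (wB (k+3))
          (hjAp (k+3) (by omega)).1 (hjBp (k+3) (by omega)).1
          ((hhp (k+3) (by omega)).2.1)
  -- the segments glue together
  have hsegglue : ∀ k, seg k (len k) = seg (k+1) 0 := by
    intro k
    cases k with
    | zero =>
      rw [hlen0, hseg0, Road.cat_right eouter (t1 + t2), Road.cat_right einner t2,
        ht2, Road.trav_last, hsegk 0, Road.cat_left (Nat.zero_le _), Road.trav_zero]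
      exact (hjBp 2 (by omega)).2.2
    | succ k =>
      rw [hlenk k, hsegk k, Road.cat_right (einnerk k) _, Road.trav_last,
        hsegk (k+1), Road.cat_left (Nat.zero_le _), Road.trav_zero]
      exact (hjBp (k+3) (by omega)).2.2
  -- membership of the segments
  have hsegmem0 : ∀ r ≤ len 0, seg 0 r ∈ S ∧ seg 0 r ∈ ERB W I 1 ∪ ERB W I 2 := by
    intro r hr
    rw [hlen0] at hr
    rw [hseg0]
    have hERB2eq : ERB W I 2 = cutRect (W 2) (I (2-1)) ∪ botRect (W 2) ((W (2+1)).l) := by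
      unfold ERB
      rw [if_neg (by omega)]
    rcases Road.cat_sites eouter r hr with ⟨i', hi', he⟩ | ⟨j', hj', he⟩
    · rw [he]
      have := hEmem i' hi'
      exact ⟨hERB1 this, Or.inl this⟩
    · rw [he]
      rcases Road.cat_sites einner j' (by omega : j' ≤ t1 + t2) with
        ⟨i'', hi'', he2⟩ | ⟨j'', hj'', he2⟩
      · rw [he2]
        obtain ⟨u, hu1, hu2, he3⟩ := Road.trav_sites (vf 2) i2 (uA 2) i'' (ht1 ▸ hi'')
        rw [he3]
        have hu : u ≤ vm 2 := le_trans hu2 (max_le hi2le (hjAp 2 (by omega)).2.1)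
        have := (hvp 2 (by omega)).1 u hu
        exact ⟨this.1, Or.inr (by rw [hERB2eq]; exact Or.inl this.2)⟩
      · rw [he2]
        obtain ⟨u, hu1, hu2, he3⟩ := Road.trav_sites (hf 2) (wA 2) (wB 2) j'' (ht2 ▸ hj'')
        rw [he3]
        have hu : u ≤ hm 2 := le_trans hu2 (max_le (hjAp 2 (by omega)).1 (hjBp 2 (by omega)).1)
        have := (hhp 2 (by omega)).1 u hu
        exact ⟨this.1, Or.inr (by rw [hERB2eq]; exact Or.inr this.2)⟩
  have hsegmemk : ∀ k, 1 ≤ k → ∀ r ≤ len k, seg k r ∈ S ∧ seg k r ∈ ERB W I (k+2) := by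
    intro k hk r hr
    cases k with
    | zero => omega
    | succ k =>
      rw [hlenk k] at hr
      rw [hsegk k]
      have hERBeq : ERB W I (k+3)
          = cutRect (W (k+3)) (I (k+3-1)) ∪ botRect (W (k+3)) ((W (k+3+1)).l) := by
        unfold ERB
        rw [if_neg (by omega)]
      rcases Road.cat_sites (einnerk k) r hr with ⟨i'', hi'', he2⟩ | ⟨j'', hj'', he2⟩
      · rw [he2]
        obtain ⟨u, hu1, hu2, he3⟩ := Road.trav_sites (vf (k+3)) (uB (k+2)) (uA (k+3)) i'' hi''
        rw [he3]
        have hu : u ≤ vm (k+3) := le_trans hu2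
          (max_le (hjBp (k+2) (by omega)).2.1 (hjAp (k+3) (by omega)).2.1)
        have := (hvp (k+3) (by omega)).1 u hu
        refine ⟨this.1, ?_⟩
        rw [hERBeq]
        exact Or.inl this.2
      · rw [he2]
        obtain ⟨u, hu1, hu2, he3⟩ := Road.trav_sites (hf (k+3)) (wA (k+3)) (wB (k+3)) j'' hj''
        rw [he3]
        have hu : u ≤ hm (k+3) := le_trans hu2
          (max_le (hjAp (k+3) (by omega)).1 (hjBp (k+3) (by omega)).1)
        have := (hhp (k+3) (by omega)).1 u hu
        refine ⟨this.1, ?_⟩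
        rw [hERBeq]
        exact Or.inr this.2
  -- the glued infinite walk
  have hg0 : Road.glue len seg 0 = p := by
    rw [Road.glue_zero len hlenge seg, hseg0, Road.cat_left (Nat.zero_le nE), hE0]
  have hgadj := Road.glue_adj len hlenge seg hsegadj hsegglue
  have hgmem : ∀ m, Road.glue len seg m ∈ S ∧
      ∃ j, 1 ≤ j ∧ Road.glue len seg m ∈ ERB W I j := by
    intro m
    obtain ⟨k, r, hr, he⟩ := Road.glue_mem len hlenge seg m
    rw [he]
    cases k with
    | zero =>
      obtain ⟨hS, hmem⟩ := hsegmem0 r hr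
      rcases hmem with h | h
      · exact ⟨hS, 1, le_refl 1, h⟩
      · exact ⟨hS, 2, by omega, h⟩
    | succ k =>
      obtain ⟨hS, hmem⟩ := hsegmemk (k+1) (by omega) r hr
      exact ⟨hS, k+3, by omega, hmem⟩
  -- each site is visited only finitely often
  have hfin : ∀ x : ℤ × ℤ, {m | Road.glue len seg m = x}.Finite := by
    intro x
    obtain ⟨k0, hk0⟩ : ∃ k0 : ℕ, ∀ k, k0 ≤ k → ∀ r ≤ len k, seg k r ≠ x := by
      refine ⟨(x.1 - ((W 1).a + ((W 1).s:ℤ))).toNat + ((W 1).b - x.2).toNat + 4, ?_⟩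
      intro k hk r hr hcon
      have hk1 : 1 ≤ k := by omega
      have hmem := (hsegmemk k hk1 r hr).2
      rw [hcon] at hmem
      unfold ERB at hmem
      rw [if_neg (by omega)] at hmem
      have hkZ : ((x.1 - ((W 1).a + ((W 1).s:ℤ))).toNat : ℤ)
          + (((W 1).b - x.2).toNat : ℤ) + 4 ≤ (k:ℤ) := by exact_mod_cast hk
      have hnn1 : (0:ℤ) ≤ ((x.1 - ((W 1).a + ((W 1).s:ℤ))).toNat : ℤ) := Int.natCast_nonneg _
      have hnn2 : (0:ℤ) ≤ (((W 1).b - x.2).toNat : ℤ) := Int.natCast_nonneg _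
      have ht1' : x.1 - ((W 1).a + ((W 1).s:ℤ))
          ≤ ((x.1 - ((W 1).a + ((W 1).s:ℤ))).toNat : ℤ) := Int.self_le_toNat _
      have ht2' : (W 1).b - x.2 ≤ (((W 1).b - x.2).toNat : ℤ) := Int.self_le_toNat _
      rcases hmem with h | h
      · -- x lies in the cut frame of W (k+2) : far to the right
        obtain ⟨ha, -, -, -⟩ := h
        push_cast at ha
        have hlf := lft_eq (k+1) (by omega)
        norm_num at hlf
        rw [hlf] at ha
        have hM := M_lin k
        linarith
      · -- x lies in the extended bottom of W (k+2) : far below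
        obtain ⟨-, -, -, hb⟩ := h
        have hB1 := B_step (k+1) (by omega)
        norm_num at hB1
        have hB2 := B_lin k
        have hlk2 := (hWf (k+2)).1
        linarith
    exact Set.Finite.subset (Set.finite_Iio (Road.Ofs len k0))
      (fun m hm => Road.glue_visits len hlenge seg x k0 hk0 m hm)
  -- loop-erase the walk
  obtain ⟨f, hinj, hf0, hfadj, hfr⟩ := Road.loop_erase (Road.glue len seg) hgadj hfin
  refine ⟨f, hinj, ?_, hfadj, ?_⟩
  · rw [hf0, hg0]
  · intro n
    obtain ⟨m, hm⟩ := hfr n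
    rw [hm]
    exact hgmem m
end

section
/- If (R_m) is a well-joined sequence of rectangles with alternating types starting with V→H, and a subgraph of Z² contains a vertical crossing of R_{2k−1} and a horizontal crossing of R_{2k} for every k, then the subgraph contains an infinite path (an infinite connected subgraph meeting every R_m). -/
namespace WJ

def stp (l : List (ℤ × ℤ)) : List ((ℤ × ℤ) × (ℤ × ℤ)) := l.zip l.tail

lemma stp_nil : stp [] = [] := rfl
lemma stp_single (a : ℤ × ℤ) : stp [a] = [] := rfl
lemma stp_cons_cons (a b : ℤ × ℤ) (l : List (ℤ × ℤ)) :
    stp (a :: b :: l) = (a, b) :: stp (b :: l) := rfl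

lemma mem_stp {l : List (ℤ × ℤ)} {s : (ℤ × ℤ) × (ℤ × ℤ)} (h : s ∈ stp l) :
    s.1 ∈ l ∧ s.2 ∈ l := by
  obtain ⟨u, v⟩ := s
  have h2 := List.of_mem_zip h
  exact ⟨h2.1, List.mem_of_mem_tail h2.2⟩

lemma chain'_stp {R : ℤ × ℤ → ℤ × ℤ → Prop} :
    ∀ {l : List (ℤ × ℤ)}, l.Chain' R → ∀ s ∈ stp l, R s.1 s.2 := by
  intro l
  induction l with
  | nil => intro _ s hs; simp [stp_nil] at hs
  | cons a t ih =>
    intro hc s hs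
    cases t with
    | nil => simp [stp_single] at hs
    | cons b t' =>
      rw [stp_cons_cons] at hs
      rcases List.mem_cons.1 hs with h | h
      · subst h; exact (List.isChain_cons_cons.1 hc).1
      · exact ih (List.isChain_cons_cons.1 hc).2 s h

lemma stp_append : ∀ (l1 l2 : List (ℤ × ℤ)) (h1 : l1 ≠ []) (h2 : l2 ≠ []),
    stp (l1 ++ l2) = stp l1 ++ (l1.getLast h1, l2.head h2) :: stp l2 := by
  intro l1
  induction l1 with
  | nil => intro l2 h1; exact absurd rfl h1
  | cons a t ih =>
    intro l2 _ h2
    cases t with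
    | nil =>
      cases l2 with
      | nil => exact absurd rfl h2
      | cons b t2 => simp [stp, List.zip]
    | cons b t' =>
      have := ih l2 (by simp) h2
      simp only [List.cons_append, stp_cons_cons]
      rw [show (b :: t') ++ l2 = (b :: t') ++ l2 from rfl] at this
      simp only [List.cons_append] at this
      rw [this]
      simp [List.getLast_cons]

lemma countP_split (p q : (ℤ×ℤ)×(ℤ×ℤ) → Bool) (l : List ((ℤ×ℤ)×(ℤ×ℤ))) :
    l.countP p = l.countP (fun a => p a && q a) + l.countP (fun a => p a && !q a) := by
  induction l with
  | nil => simp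
  | cons a t ih =>
    simp only [List.countP_cons]
    cases hp : p a <;> cases hq : q a <;> simp [hp, hq] <;> omega

lemma countP_or (p q : (ℤ×ℤ)×(ℤ×ℤ) → Bool) (l : List ((ℤ×ℤ)×(ℤ×ℤ)))
    (h : ∀ a ∈ l, ¬(p a = true ∧ q a = true)) :
    l.countP (fun a => p a || q a) = l.countP p + l.countP q := by
  induction l with
  | nil => simp
  | cons a t ih =>
    simp only [List.countP_cons]
    have ha := h a (by simp)
    have ht : ∀ b ∈ t, ¬(p b = true ∧ q b = true) := fun b hb => h b (by simp [hb])
    cases hp : p a <;> cases hq : q a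
    · simp [hp, hq, ih ht]
    · simp [hp, hq, ih ht]; omega
    · simp [hp, hq, ih ht]; omega
    · exact absurd ⟨hp, hq⟩ ha

lemma cross_parity (χ : ℤ × ℤ → Bool) :
    ∀ (l : List (ℤ × ℤ)) (a : ℤ × ℤ),
      ((stp (a :: l)).countP (fun s => χ s.1 != χ s.2)
        + (if χ a = χ ((a :: l).getLast (by simp)) then 0 else 1)) % 2 = 0 := by
  intro l
  induction l with
  | nil => intro a; simp [stp_single]
  | cons b t ih =>
    intro a
    rw [stp_cons_cons, List.countP_cons]
    have := ih b
    rw [List.getLast_cons (by simp : (b :: t) ≠ [])]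
    cases h1 : χ a <;> cases h2 : χ b <;>
      cases h3 : χ ((b :: t).getLast (by simp)) <;>
      simp [h1, h2, h3] at this ⊢ <;> omega

end WJ

namespace WJ

def run (p : ℤ × ℤ) (d : ℤ × ℤ) : ℕ → List (ℤ × ℤ)
  | 0 => [p]
  | n + 1 => p :: run (p.1 + d.1, p.2 + d.2) d (n)

lemma run_ne_nil (p d : ℤ × ℤ) (n : ℕ) : run p d n ≠ [] := by
  cases n <;> simp [run]

lemma head?_run (p d : ℤ × ℤ) (n : ℕ) : (run p d n).head? = some p := by
  cases n <;> rfl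

lemma getLast?_run (d : ℤ × ℤ) : ∀ (n : ℕ), ∀ p : ℤ × ℤ,
    (run p d n).getLast? = some (p.1 + n * d.1, p.2 + n * d.2) := by
  intro n
  induction n with
  | zero => intro p; simp [run]
  | succ m ih =>
    intro p
    show (p :: run (p.1 + d.1, p.2 + d.2) d m).getLast? = _
    rcases hm : run (p.1 + d.1, p.2 + d.2) d m with _ | ⟨q, t⟩
    · exact absurd hm (run_ne_nil _ _ _)
    · rw [List.getLast?_cons_cons]
      rw [← hm, ih]
      congr 1
      simp
      constructor <;> push_cast <;> ring

lemma mem_run (d : ℤ × ℤ) : ∀ (n : ℕ) (p q : ℤ × ℤ), q ∈ run p d n →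
    ∃ i : ℕ, i ≤ n ∧ q = (p.1 + i * d.1, p.2 + i * d.2) := by
  intro n
  induction n with
  | zero =>
    intro p q hq
    simp [run] at hq
    exact ⟨0, by simp, by simp [hq]⟩
  | succ m ih =>
    intro p q hq
    rcases List.mem_cons.1 hq with h | h
    · exact ⟨0, by simp, by simp [h]⟩
    · obtain ⟨i, hi, hq⟩ := ih _ _ h
      refine ⟨i + 1, by omega, ?_⟩
      rw [hq]
      simp only [Prod.mk.injEq]
      constructor <;> push_cast <;> ring

lemma chain'_run (d : ℤ × ℤ) (hd : d.1.natAbs + d.2.natAbs = 1) :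
    ∀ (n : ℕ) (p : ℤ × ℤ), (run p d n).Chain' SiteAdj := by
  intro n
  induction n with
  | zero => intro p; simp [run, List.Chain']
  | succ m ih =>
    intro p
    show ((p :: run (p.1 + d.1, p.2 + d.2) d m)).Chain' SiteAdj
    rw [List.Chain', List.isChain_cons]
    refine ⟨?_, ih _⟩
    intro y hy
    rw [head?_run] at hy
    simp at hy
    subst hy
    simp [SiteAdj]
    omega

lemma stp_run_mem (d : ℤ × ℤ) : ∀ (n : ℕ) (p : ℤ × ℤ) (s : (ℤ×ℤ)×(ℤ×ℤ)),
    s ∈ stp (run p d n) →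
    ∃ i : ℕ, i < n ∧ s = ((p.1 + i * d.1, p.2 + i * d.2),
      (p.1 + (i+1) * d.1, p.2 + (i+1) * d.2)) := by
  intro n
  induction n with
  | zero => intro p s hs; simp [run, stp_single] at hs
  | succ m ih =>
    intro p s hs
    have hrun : run p d (m+1) = p :: run (p.1 + d.1, p.2 + d.2) d m := rfl
    rcases hm : run (p.1 + d.1, p.2 + d.2) d m with _ | ⟨q, t⟩
    · exact absurd hm (run_ne_nil _ _ _)
    rw [hrun, hm, stp_cons_cons] at hs
    rcases List.mem_cons.1 hs with h | h
    · refine ⟨0, by omega, ?_⟩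
      have hq : q = (p.1 + d.1, p.2 + d.2) := by
        have := head?_run (p.1 + d.1, p.2 + d.2) d m
        rw [hm] at this; simp at this; exact this
      simp [h, hq]
    · rw [← hm] at h
      obtain ⟨i, hi, hseq⟩ := ih _ s h
      refine ⟨i + 1, by omega, ?_⟩
      rw [hseq]
      simp only [Prod.mk.injEq]
      refine ⟨⟨?_, ?_⟩, ?_, ?_⟩ <;> push_cast <;> ring

end WJ

namespace WJ

def isH (p : ℤ × ℤ) (s : (ℤ×ℤ)×(ℤ×ℤ)) : Bool :=
  decide (s.1.2 = s.2.2 ∧ s.1.2 ≤ p.2 ∧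
    ((s.1.1 = p.1 - 1 ∧ s.2.1 = p.1) ∨ (s.1.1 = p.1 ∧ s.2.1 = p.1 - 1)))

def Wc (γ : List (ℤ × ℤ)) (p : ℤ × ℤ) : ℕ := (stp γ).countP (isH p)

lemma Wc_up (γ : List (ℤ × ℤ)) (a b : ℤ) (h : (a, b + 1) ∉ γ) :
    Wc γ (a, b) = Wc γ (a, b + 1) := by
  apply List.countP_congr
  rintro ⟨⟨u1, u2⟩, ⟨v1, v2⟩⟩ hs
  obtain ⟨hu, hv⟩ := mem_stp hs
  have hu' : ¬(u1 = a ∧ u2 = b + 1) := by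
    rintro ⟨e1, e2⟩; subst e1; subst e2; exact h hu
  have hv' : ¬(v1 = a ∧ v2 = b + 1) := by
    rintro ⟨e1, e2⟩; subst e1; subst e2; exact h hv
  simp only [isH, decide_eq_true_iff]
  omega

lemma Wc_right (γ : List (ℤ × ℤ)) (hc : γ.Chain' SiteAdj) (hne : γ ≠ [])
    (hcl : γ.head? = γ.getLast?) (a b : ℤ) (h : (a, b) ∉ γ) :
    (Wc γ (a, b) + Wc γ (a + 1, b)) % 2 = 0 := by
  classical
  set χ : ℤ × ℤ → Bool := fun q => decide (q.1 = a ∧ q.2 ≤ b) with hχ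
  obtain ⟨c, l, rfl⟩ : ∃ c l, γ = c :: l := by
    cases γ with
    | nil => exact absurd rfl hne
    | cons c l => exact ⟨c, l, rfl⟩
  have hcl' : c = (c :: l).getLast (by simp) := by
    rw [List.getLast?_eq_getLast (l := c :: l) (by simp)] at hcl
    simpa using hcl
  have hpar := cross_parity χ l c
  rw [← hcl', if_pos rfl] at hpar
  have hkey : ∀ s ∈ stp (c :: l),
      ((χ s.1 != χ s.2) = true ↔ (isH (a, b) s || isH (a + 1, b) s) = true) := by
    rintro ⟨⟨u1, u2⟩, ⟨v1, v2⟩⟩ hs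
    have hadj := chain'_stp hc _ hs
    obtain ⟨hu, hv⟩ := mem_stp hs
    have hu' : ¬(u1 = a ∧ u2 = b) := by
      rintro ⟨e1, e2⟩; subst e1; subst e2; exact h hu
    have hv' : ¬(v1 = a ∧ v2 = b) := by
      rintro ⟨e1, e2⟩; subst e1; subst e2; exact h hv
    simp only [SiteAdj] at hadj
    simp only [hχ, isH, bne_iff_ne, ne_eq, decide_eq_decide, Bool.or_eq_true,
      decide_eq_true_iff]
    omega
  have h1 : (stp (c :: l)).countP (fun s => χ s.1 != χ s.2)
      = (stp (c :: l)).countP (fun s => isH (a, b) s || isH (a + 1, b) s) :=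
    List.countP_congr hkey
  have h2 : (stp (c :: l)).countP (fun s => isH (a, b) s || isH (a + 1, b) s)
      = (stp (c :: l)).countP (isH (a, b)) + (stp (c :: l)).countP (isH (a + 1, b)) := by
    apply countP_or
    rintro ⟨⟨u1, u2⟩, ⟨v1, v2⟩⟩ _
    simp only [isH, decide_eq_true_iff]
    omega
  show ((stp (c :: l)).countP (isH (a, b)) + (stp (c :: l)).countP (isH (a + 1, b))) % 2 = 0
  omega

lemma Wc_step (γ : List (ℤ × ℤ)) (hc : γ.Chain' SiteAdj) (hne : γ ≠ [])
    (hcl : γ.head? = γ.getLast?) (u v : ℤ × ℤ) (hadj : SiteAdj u v)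
    (hu : u ∉ γ) (hv : v ∉ γ) : Wc γ u % 2 = Wc γ v % 2 := by
  obtain ⟨u1, u2⟩ := u
  obtain ⟨v1, v2⟩ := v
  simp only [SiteAdj] at hadj
  have hcase : (v1 = u1 + 1 ∧ v2 = u2) ∨ (u1 = v1 + 1 ∧ u2 = v2) ∨
      (v2 = u2 + 1 ∧ v1 = u1) ∨ (u2 = v2 + 1 ∧ u1 = v1) := by omega
  rcases hcase with ⟨e1, e2⟩ | ⟨e1, e2⟩ | ⟨e1, e2⟩ | ⟨e1, e2⟩
  · have h' := Wc_right γ hc hne hcl u1 u2 hu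
    rw [show ((u1 + 1 : ℤ), u2) = (v1, v2) by rw [e1, e2]] at h'
    omega
  · have h' := Wc_right γ hc hne hcl v1 v2 hv
    rw [show ((v1 + 1 : ℤ), v2) = (u1, u2) by rw [e1, e2]] at h'
    omega
  · have h' := Wc_up γ u1 u2 (by rw [show ((u1 : ℤ), u2 + 1) = (v1, v2) by rw [e1, e2]]; exact hv)
    rw [show ((u1 : ℤ), u2 + 1) = (v1, v2) by rw [e1, e2]] at h'
    rw [h']
  · have h' := Wc_up γ v1 v2 (by rw [show ((v1 : ℤ), v2 + 1) = (u1, u2) by rw [e1, e2]]; exact hu)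
    rw [show ((v1 : ℤ), v2 + 1) = (u1, u2) by rw [e1, e2]] at h'
    rw [h']

lemma Wc_walk (γ : List (ℤ × ℤ)) (hc : γ.Chain' SiteAdj) (hne : γ ≠ [])
    (hcl : γ.head? = γ.getLast?) :
    ∀ (l : List (ℤ × ℤ)) (h : l ≠ []), l.Chain' SiteAdj → (∀ x ∈ l, x ∉ γ) →
      Wc γ (l.head h) % 2 = Wc γ (l.getLast h) % 2 := by
  intro l
  induction l with
  | nil => intro h; exact absurd rfl h
  | cons a t ih =>
    intro _ hch hmem
    cases t with
    | nil => rfl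
    | cons b t' =>
      have h1 := Wc_step γ hc hne hcl a b (List.isChain_cons_cons.1 hch).1
        (hmem a (by simp)) (hmem b (by simp))
      have h2 := ih (by simp) (List.isChain_cons_cons.1 hch).2
        (fun x hx => hmem x (by simp [hx]))
      rw [List.getLast_cons (by simp : (b :: t') ≠ [])]
      simp only [List.head_cons] at h1 h2 ⊢
      omega

lemma top_count (t yv ay2 : ℤ) (hy : ay2 < yv) : ∀ (n : ℕ) (c : ℤ), t ≤ c → c - n ≤ t - 1 →
    (stp (run (c, yv) (-1, 0) n)).countP
      (fun s => decide (s.1.2 = s.2.2 ∧ ay2 < s.1.2 ∧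
        ((s.1.1 = t - 1 ∧ s.2.1 = t) ∨ (s.1.1 = t ∧ s.2.1 = t - 1)))) = 1 := by
  intro n
  induction n with
  | zero => intro c h1 h2; simp at h2; omega
  | succ m ih =>
    intro c h1 h2
    have e : (((c, yv).1 + ((-1 : ℤ), (0 : ℤ)).1, (c, yv).2 + ((-1 : ℤ), (0 : ℤ)).2) : ℤ × ℤ)
        = (c - 1, yv) := by simp only [Prod.mk.injEq]; exact ⟨by ring, by ring⟩
    have hrw : run (c, yv) (-1, 0) (m + 1) = (c, yv) :: run (c - 1, yv) (-1, 0) m := by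
      rw [show run (c, yv) (-1, 0) (m + 1)
        = (c, yv) :: run ((c,yv).1 + ((-1:ℤ),(0:ℤ)).1, (c,yv).2 + ((-1:ℤ),(0:ℤ)).2) (-1, 0) m
        from rfl, e]
    rw [hrw]
    rcases hm : run (c - 1, yv) (-1, 0) m with _ | ⟨q, tl⟩
    · exact absurd hm (run_ne_nil _ _ _)
    have hq : q = (c - 1, yv) := by
      have := head?_run (c - 1, yv) (-1, 0) m
      rw [hm] at this; simp at this; exact this
    rw [stp_cons_cons]
    rw [List.countP_cons]
    rw [← hm]
    rw [hq]
    split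
    · rename_i hcnd
      simp only [decide_eq_true_iff, Prod.fst, Prod.snd, true_and, and_true] at hcnd
      have hzero : (stp (run (c - 1, yv) (-1, 0) m)).countP
          (fun s => decide (s.1.2 = s.2.2 ∧ ay2 < s.1.2 ∧
            ((s.1.1 = t - 1 ∧ s.2.1 = t) ∨ (s.1.1 = t ∧ s.2.1 = t - 1)))) = 0 := by
        rw [List.countP_eq_zero]
        intro s hs
        obtain ⟨i, hi, rfl⟩ := stp_run_mem _ _ _ _ hs
        simp only [decide_eq_true_iff, Prod.fst, Prod.snd, true_and, and_true]
        push_cast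
        omega
      rw [hzero]
    · rename_i hcnd
      simp only [decide_eq_true_iff, Prod.fst, Prod.snd, true_and, and_true] at hcnd
      have hih := ih (c - 1) (by omega) (by push_cast at h2 ⊢; omega)
      omega
end WJ

namespace WJ

lemma head?_append_left {α : Type} (l1 l2 : List α) (x : α) (h : l1.head? = some x) :
    (l1 ++ l2).head? = some x := by
  rw [List.head?_append, h]; rfl

lemma getLast?_append_right {α : Type} (l1 l2 : List α) (x : α) (h : l2.getLast? = some x) :
    (l1 ++ l2).getLast? = some x := by
  rw [List.getLast?_append, h]; rfl

lemma stp_append' (l1 l2 : List (ℤ × ℤ)) (x y : ℤ × ℤ)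
    (h1 : l1.getLast? = some x) (h2 : l2.head? = some y) :
    stp (l1 ++ l2) = stp l1 ++ (x, y) :: stp l2 := by
  have hne1 : l1 ≠ [] := by rintro rfl; simp at h1
  have hne2 : l2 ≠ [] := by rintro rfl; simp at h2
  rw [stp_append l1 l2 hne1 hne2]
  rw [List.getLast?_eq_getLast (l := l1) hne1] at h1
  rw [List.head?_eq_head hne2] at h2
  have hx : l1.getLast hne1 = x := Option.some_injective _ h1
  have hy : l2.head hne2 = y := Option.some_injective _ h2
  rw [hx, hy]

lemma crossing (ax1 ax2 ay1 ay2 bx1 bx2 by1 by2 : ℤ)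
    (hx1 : bx1 ≤ ax1) (hx2 : ax2 ≤ bx2) (hy1 : ay1 ≤ by1) (hy2 : by2 ≤ ay2)
    (fl gl : List (ℤ × ℤ)) (hfne : fl ≠ []) (hgne : gl ≠ [])
    (hfc : fl.Chain' SiteAdj) (hgc : gl.Chain' SiteAdj)
    (hfr : ∀ p ∈ fl, ax1 ≤ p.1 ∧ p.1 ≤ ax2 ∧ ay1 ≤ p.2 ∧ p.2 ≤ ay2)
    (hgr : ∀ p ∈ gl, bx1 ≤ p.1 ∧ p.1 ≤ bx2 ∧ by1 ≤ p.2 ∧ p.2 ≤ by2)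
    (hf0 : (fl.head hfne).2 = ay1) (hfl2 : (fl.getLast hfne).2 = ay2)
    (hg0 : (gl.head hgne).1 = bx1) (hgl2 : (gl.getLast hgne).1 = bx2) :
    ∃ c, c ∈ fl ∧ c ∈ gl := by
  by_contra hdisj
  push_neg at hdisj
  -- names
  set a' : ℤ := (gl.head hgne).2 with ha'
  set b' : ℤ := (gl.getLast hgne).2 with hb'
  have hgHead : gl.head hgne = (bx1, a') := by
    rw [← hg0]
  have hgLast : gl.getLast hgne = (bx2, b') := by
    rw [← hgl2]
  have hgh_mem : gl.head hgne ∈ gl := List.head_mem hgne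
  have hgl_mem : gl.getLast hgne ∈ gl := List.getLast_mem hgne
  have hbnd_a : by1 ≤ a' ∧ a' ≤ by2 := ⟨(hgr _ hgh_mem).2.2.1, (hgr _ hgh_mem).2.2.2⟩
  have hbnd_b : by1 ≤ b' ∧ b' ≤ by2 := ⟨(hgr _ hgl_mem).2.2.1, (hgr _ hgl_mem).2.2.2⟩
  have hbxx : bx1 ≤ bx2 := by
    have := hgr _ hgh_mem; omega
  have hfh_mem : fl.head hfne ∈ fl := List.head_mem hfne
  have hfl_mem : fl.getLast hfne ∈ fl := List.getLast_mem hfne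
  have hayy : ay1 ≤ ay2 := by
    have h1 := (hfr _ hfh_mem).2.2
    omega
  set s0 : ℤ := (fl.head hfne).1 with hs0
  set t : ℤ := (fl.getLast hfne).1 with ht
  have hs0b : ax1 ≤ s0 ∧ s0 ≤ ax2 := ⟨(hfr _ hfh_mem).1, (hfr _ hfh_mem).2.1⟩
  have htb : ax1 ≤ t ∧ t ≤ ax2 := ⟨(hfr _ hfl_mem).1, (hfr _ hfl_mem).2.1⟩
  have hfHead : fl.head hfne = (s0, ay1) := by rw [← hf0]
  have hfLast : fl.getLast hfne = (t, ay2) := by rw [← hfl2]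
  -- the closing frame
  set n1 : ℕ := (ay2 + 1 - b').toNat with hn1
  set n2 : ℕ := (bx2 - bx1 + 1).toNat with hn2
  set n3 : ℕ := (ay2 - a').toNat with hn3
  have hn1' : (n1 : ℤ) = ay2 + 1 - b' := Int.toNat_of_nonneg (by omega)
  have hn2' : (n2 : ℤ) = bx2 - bx1 + 1 := Int.toNat_of_nonneg (by omega)
  have hn3' : (n3 : ℤ) = ay2 - a' := Int.toNat_of_nonneg (by omega)
  set r1 : List (ℤ × ℤ) := run (bx2 + 1, b') (0, 1) n1 with hr1
  set r2 : List (ℤ × ℤ) := run (bx2, ay2 + 1) (-1, 0) n2 with hr2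
  set r3 : List (ℤ × ℤ) := run (bx1 - 1, ay2) (0, -1) n3 with hr3
  set γ : List (ℤ × ℤ) := gl ++ (r1 ++ (r2 ++ (r3 ++ [(bx1, a')]))) with hγ
  -- heads and lasts of the pieces
  have hr1h : r1.head? = some (bx2 + 1, b') := head?_run _ _ _
  have hr2h : r2.head? = some (bx2, ay2 + 1) := head?_run _ _ _
  have hr3h : r3.head? = some (bx1 - 1, ay2) := head?_run _ _ _
  have hr1l : r1.getLast? = some (bx2 + 1, ay2 + 1) := by
    rw [hr1, getLast?_run]
    simp only [Option.some.injEq, Prod.mk.injEq]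
    constructor <;> simp <;> omega
  have hr2l : r2.getLast? = some (bx1 - 1, ay2 + 1) := by
    rw [hr2, getLast?_run]
    simp only [Option.some.injEq, Prod.mk.injEq]
    constructor <;> simp <;> omega
  have hr3l : r3.getLast? = some (bx1 - 1, a') := by
    rw [hr3, getLast?_run]
    simp only [Option.some.injEq, Prod.mk.injEq]
    constructor <;> simp <;> omega
  have hgll : gl.getLast? = some (bx2, b') := by
    rw [List.getLast?_eq_getLast (l := gl) hgne, hgLast]
  have hglh : gl.head? = some (bx1, a') := by
    rw [List.head?_eq_head hgne, hgHead]
  -- chain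
  have hch : γ.Chain' SiteAdj := by
    rw [hγ]
    rw [List.Chain', List.isChain_append]
    refine ⟨hgc, ?_, ?_⟩
    · rw [List.isChain_append]
      refine ⟨chain'_run (0,1) (by simp) n1 _, ?_, ?_⟩
      · rw [List.isChain_append]
        refine ⟨chain'_run (-1,0) (by simp) n2 _, ?_, ?_⟩
        · rw [List.isChain_append]
          refine ⟨chain'_run (0,-1) (by simp) n3 _, by simp, ?_⟩
          · intro x hx y hy
            rw [hr3l] at hx
            simp at hx hy
            subst hx; subst hy
            simp [SiteAdj]
        · intro x hx y hy
          rw [hr2l] at hx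
          rw [head?_append_left _ _ _ hr3h] at hy
          simp at hx hy
          subst hx; subst hy
          simp [SiteAdj]
      · intro x hx y hy
        rw [hr1l] at hx
        rw [head?_append_left _ _ _ hr2h] at hy
        simp at hx hy
        subst hx; subst hy
        simp [SiteAdj]
    · intro x hx y hy
      rw [hgll] at hx
      rw [head?_append_left _ _ _ hr1h] at hy
      simp at hx hy
      subst hx; subst hy
      simp [SiteAdj]
  have hγne : γ ≠ [] := by
    rw [hγ]; simp [hgne]
  have hcl : γ.head? = γ.getLast? := by
    rw [hγ]
    rw [head?_append_left _ _ _ hglh]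
    rw [getLast?_append_right _ _ (bx1, a')
      (getLast?_append_right _ _ _ (getLast?_append_right _ _ _
        (getLast?_append_right _ _ _ (by simp))))]
  -- membership description of γ
  have hmemγ : ∀ q ∈ γ, q ∈ gl ∨
      (q.1 = bx2 + 1 ∧ b' ≤ q.2 ∧ q.2 ≤ ay2 + 1) ∨
      (q.2 = ay2 + 1 ∧ bx1 - 1 ≤ q.1 ∧ q.1 ≤ bx2) ∨
      (q.1 = bx1 - 1 ∧ a' ≤ q.2 ∧ q.2 ≤ ay2) := by
    intro q hq
    rw [hγ] at hq
    simp only [List.mem_append, List.mem_singleton] at hq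
    rcases hq with hq | hq | hq | hq | hq
    · exact Or.inl hq
    · obtain ⟨i, hi, rfl⟩ := mem_run _ _ _ _ hq
      right; left
      refine ⟨by simp, by simp <;> omega, by simp <;> omega⟩
    · obtain ⟨i, hi, rfl⟩ := mem_run _ _ _ _ hq
      right; right; left
      refine ⟨by simp, by simp <;> omega, by simp <;> omega⟩
    · obtain ⟨i, hi, rfl⟩ := mem_run _ _ _ _ hq
      right; right; right
      refine ⟨by simp, by simp <;> omega, by simp <;> omega⟩
    · left
      rw [hq, ← hgHead]
      exact hgh_mem
  -- fl is disjoint from γ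
  have hfγ : ∀ p ∈ fl, p ∉ γ := by
    intro p hp hpγ
    have hb := hfr p hp
    rcases hmemγ p hpγ with h | h | h | h
    · exact hdisj p hp h
    · omega
    · omega
    · omega
  -- invariance along fl
  have hwalk := Wc_walk γ hch hγne hcl fl hfne hfc hfγ
  -- bottom value is 0
  have hW0 : Wc γ (fl.head hfne) = 0 := by
    rw [Wc, List.countP_eq_zero]
    rintro ⟨⟨u1, u2⟩, ⟨v1, v2⟩⟩ hs hP
    obtain ⟨hu, hv⟩ := mem_stp hs
    simp only [isH, decide_eq_true_iff, hfHead] at hP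
    obtain ⟨he, hle, hcols⟩ := hP
    rcases hcols with ⟨e1, e2⟩ | ⟨e1, e2⟩
    · -- w = (v1,v2) = (s0, u2)
      rcases hmemγ _ hv with h | h | h | h
      · have hb := hgr _ h
        simp at hb
        have hveq : ((v1, v2) : ℤ × ℤ) = (s0, ay1) := by
          simp only [Prod.mk.injEq]
          omega
        exact hdisj (fl.head hfne) hfh_mem (by rw [hfHead, ← hveq]; exact h)
      · simp at h; omega
      · simp at h; omega
      · simp at h; omega
    · rcases hmemγ _ hu with h | h | h | h
      · have hb := hgr _ h
        simp at hb
        have hueq : ((u1, u2) : ℤ × ℤ) = (s0, ay1) := by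
          simp only [Prod.mk.injEq]
          omega
        exact hdisj (fl.head hfne) hfh_mem (by rw [hfHead, ← hueq]; exact h)
      · simp at h; omega
      · simp at h; omega
      · simp at h; omega
  -- parity of column crossings at column t
  have hcolpar : (stp γ).countP (fun s => decide (s.1.2 = s.2.2 ∧
      ((s.1.1 = t - 1 ∧ s.2.1 = t) ∨ (s.1.1 = t ∧ s.2.1 = t - 1)))) % 2 = 0 := by
    obtain ⟨c, l, hγcl⟩ : ∃ c l, γ = c :: l := by
      cases hγe : γ with
      | nil => exact absurd hγe hγne
      | cons c l => exact ⟨c, l, rfl⟩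
    have hc_eq : c = (c :: l).getLast (by simp) := by
      rw [hγcl, List.getLast?_eq_getLast (l := c :: l) (by simp)] at hcl
      simpa using hcl
    have hpar := cross_parity (fun q => decide (t ≤ q.1)) l c
    rw [← hc_eq, if_pos rfl] at hpar
    have hcongr : (stp (c :: l)).countP
        (fun s => decide (t ≤ s.1.1) != decide (t ≤ s.2.1))
        = (stp (c :: l)).countP (fun s => decide (s.1.2 = s.2.2 ∧
          ((s.1.1 = t - 1 ∧ s.2.1 = t) ∨ (s.1.1 = t ∧ s.2.1 = t - 1)))) := by
      apply List.countP_congr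
      rintro ⟨⟨u1, u2⟩, ⟨v1, v2⟩⟩ hs
      have hadj := chain'_stp (hγcl ▸ hch) _ hs
      simp only [SiteAdj] at hadj
      simp only [bne_iff_ne, ne_eq, decide_eq_decide, decide_eq_true_iff]
      omega
    rw [hγcl, ← hcongr]
    omega
  -- split the column count
  have hsplit := countP_split
    (fun s => decide (s.1.2 = s.2.2 ∧
      ((s.1.1 = t - 1 ∧ s.2.1 = t) ∨ (s.1.1 = t ∧ s.2.1 = t - 1))))
    (fun s => decide (s.1.2 ≤ ay2)) (stp γ)
  have hlow : (stp γ).countP (fun s => decide (s.1.2 = s.2.2 ∧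
      ((s.1.1 = t - 1 ∧ s.2.1 = t) ∨ (s.1.1 = t ∧ s.2.1 = t - 1))) && decide (s.1.2 ≤ ay2))
      = Wc γ (t, ay2) := by
    rw [Wc]
    apply List.countP_congr
    rintro ⟨⟨u1, u2⟩, ⟨v1, v2⟩⟩ _
    simp only [Bool.and_eq_true, decide_eq_true_iff, isH]
    constructor
    · rintro ⟨⟨h1, h2⟩, h3⟩; exact ⟨h1, h3, h2⟩
    · rintro ⟨h1, h2, h3⟩; exact ⟨⟨h1, h3⟩, h2⟩
  have hhigh : (stp γ).countP (fun s => decide (s.1.2 = s.2.2 ∧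
      ((s.1.1 = t - 1 ∧ s.2.1 = t) ∨ (s.1.1 = t ∧ s.2.1 = t - 1))) && !decide (s.1.2 ≤ ay2))
      = (stp γ).countP (fun s => decide (s.1.2 = s.2.2 ∧ ay2 < s.1.2 ∧
      ((s.1.1 = t - 1 ∧ s.2.1 = t) ∨ (s.1.1 = t ∧ s.2.1 = t - 1)))) := by
    apply List.countP_congr
    rintro ⟨⟨u1, u2⟩, ⟨v1, v2⟩⟩ _
    simp only [Bool.and_eq_true, Bool.not_eq_true', decide_eq_false_iff_not,
      decide_eq_true_iff, not_le]
    constructor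
    · rintro ⟨⟨h1, h2⟩, h3⟩; exact ⟨h1, h3, h2⟩
    · rintro ⟨h1, h2, h3⟩; exact ⟨⟨h1, h3⟩, h2⟩
  -- high count is exactly 1
  have hone : (stp γ).countP (fun s => decide (s.1.2 = s.2.2 ∧ ay2 < s.1.2 ∧
      ((s.1.1 = t - 1 ∧ s.2.1 = t) ∨ (s.1.1 = t ∧ s.2.1 = t - 1)))) = 1 := by
    have hd1 : stp γ = stp gl ++ ((bx2, b'), (bx2 + 1, b')) :: stp (r1 ++ (r2 ++ (r3 ++ [(bx1, a')]))) := by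
      rw [hγ]
      exact stp_append' _ _ _ _ hgll (head?_append_left _ _ _ hr1h)
    have hd2 : stp (r1 ++ (r2 ++ (r3 ++ [(bx1, a')])))
        = stp r1 ++ ((bx2 + 1, ay2 + 1), (bx2, ay2 + 1)) :: stp (r2 ++ (r3 ++ [(bx1, a')])) :=
      stp_append' _ _ _ _ hr1l (head?_append_left _ _ _ hr2h)
    have hd3 : stp (r2 ++ (r3 ++ [(bx1, a')]))
        = stp r2 ++ ((bx1 - 1, ay2 + 1), (bx1 - 1, ay2)) :: stp (r3 ++ [(bx1, a')]) :=
      stp_append' _ _ _ _ hr2l (head?_append_left _ _ _ hr3h)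
    have hd4 : stp (r3 ++ [(bx1, a')])
        = stp r3 ++ ((bx1 - 1, a'), (bx1, a')) :: stp [(bx1, a')] :=
      stp_append' _ _ _ _ hr3l (by simp)
    rw [hd1, hd2, hd3, hd4]
    simp only [List.countP_append, List.countP_cons, stp_single]
    have hgl0 : (stp gl).countP (fun s => decide (s.1.2 = s.2.2 ∧ ay2 < s.1.2 ∧
        ((s.1.1 = t - 1 ∧ s.2.1 = t) ∨ (s.1.1 = t ∧ s.2.1 = t - 1)))) = 0 := by
      rw [List.countP_eq_zero]
      rintro ⟨⟨u1, u2⟩, ⟨v1, v2⟩⟩ hs hP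
      obtain ⟨hu, _⟩ := mem_stp hs
      have hb := hgr _ hu
      simp only [decide_eq_true_iff] at hP
      simp at hb
      omega
    have hr10 : (stp r1).countP (fun s => decide (s.1.2 = s.2.2 ∧ ay2 < s.1.2 ∧
        ((s.1.1 = t - 1 ∧ s.2.1 = t) ∨ (s.1.1 = t ∧ s.2.1 = t - 1)))) = 0 := by
      rw [List.countP_eq_zero]
      intro s hs hP
      obtain ⟨i, hi, rfl⟩ := stp_run_mem _ _ _ _ hs
      simp only [decide_eq_true_iff, Prod.fst, Prod.snd] at hP
      omega
    have hr30 : (stp r3).countP (fun s => decide (s.1.2 = s.2.2 ∧ ay2 < s.1.2 ∧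
        ((s.1.1 = t - 1 ∧ s.2.1 = t) ∨ (s.1.1 = t ∧ s.2.1 = t - 1)))) = 0 := by
      rw [List.countP_eq_zero]
      intro s hs hP
      obtain ⟨i, hi, rfl⟩ := stp_run_mem _ _ _ _ hs
      simp only [decide_eq_true_iff, Prod.fst, Prod.snd] at hP
      omega
    have hr21 : (stp r2).countP (fun s => decide (s.1.2 = s.2.2 ∧ ay2 < s.1.2 ∧
        ((s.1.1 = t - 1 ∧ s.2.1 = t) ∨ (s.1.1 = t ∧ s.2.1 = t - 1)))) = 1 := by
      rw [hr2]
      exact top_count t (ay2 + 1) ay2 (by omega) n2 bx2 (by omega) (by omega)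
    rw [hgl0, hr10, hr30, hr21]
    split
    · rename_i hC
      simp only [decide_eq_true_iff, Prod.fst, Prod.snd, true_and, and_true] at hC
      omega
    split
    · rename_i hC
      simp only [decide_eq_true_iff, Prod.fst, Prod.snd, true_and, and_true] at hC
      omega
    split
    · rename_i hC
      simp only [decide_eq_true_iff, Prod.fst, Prod.snd, true_and, and_true] at hC
      omega
    split
    · rename_i hC
      simp only [decide_eq_true_iff, Prod.fst, Prod.snd, true_and, and_true] at hC
      omega
    simp
  -- put it together
  have hWtop : Wc γ (fl.getLast hfne) = Wc γ (t, ay2) := by rw [hfLast]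
  rw [hW0, hWtop] at hwalk
  omega

end WJ

namespace WJ

lemma siteadj_symm {p q : ℤ × ℤ} (h : SiteAdj p q) : SiteAdj q p := by
  simp only [SiteAdj] at h ⊢
  omega

def Walk (T : Set (ℤ × ℤ)) (p q : ℤ × ℤ) : Prop :=
  ∃ l : List (ℤ × ℤ), l.head? = some p ∧ l.getLast? = some q ∧
    l.Chain' SiteAdj ∧ ∀ x ∈ l, x ∈ T

lemma walk_refl {T : Set (ℤ × ℤ)} {p : ℤ × ℤ} (h : p ∈ T) : Walk T p p :=
  ⟨[p], rfl, rfl, by simp [List.Chain'], by simp [h]⟩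

lemma walk_symm {T : Set (ℤ × ℤ)} {p q : ℤ × ℤ} (h : Walk T p q) : Walk T q p := by
  obtain ⟨l, h1, h2, h3, h4⟩ := h
  refine ⟨l.reverse, ?_, ?_, ?_, ?_⟩
  · rw [List.head?_reverse]; exact h2
  · rw [List.getLast?_reverse]; exact h1
  · rw [List.Chain', List.isChain_reverse]
    exact List.IsChain.imp (fun a b hab => siteadj_symm hab) h3
  · intro x hx
    exact h4 x (List.mem_reverse.1 hx)

lemma walk_trans {T : Set (ℤ × ℤ)} {p q r : ℤ × ℤ}
    (h : Walk T p q) (h' : Walk T q r) : Walk T p r := by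
  obtain ⟨l1, h1h, h1l, h1c, h1m⟩ := h
  obtain ⟨l2, h2h, h2l, h2c, h2m⟩ := h'
  have hne1 : l1 ≠ [] := by rintro rfl; simp at h1h
  cases l2 with
  | nil => simp at h2h
  | cons b t2 =>
    have hbq : b = q := by simpa using h2h
    cases t2 with
    | nil =>
      have : q = r := by rw [← hbq]; simpa using h2l
      exact ⟨l1, h1h, by rw [h1l, this], h1c, h1m⟩
    | cons c t3 =>
      refine ⟨l1 ++ (c :: t3), head?_append_left _ _ _ h1h, ?_, ?_, ?_⟩
      · apply getLast?_append_right
        rw [show (c :: t3).getLast? = (b :: c :: t3).getLast? from (List.getLast?_cons_cons).symm]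
        exact h2l
      · rw [List.Chain', List.isChain_append]
        refine ⟨h1c, (List.isChain_cons_cons.1 h2c).2, ?_⟩
        intro x hx y hy
        rw [h1l] at hx
        simp at hx hy
        subst hx; subst hy
        rw [← hbq]
        exact (List.isChain_cons_cons.1 h2c).1
      · intro x hx
        rcases List.mem_append.1 hx with h | h
        · exact h1m x h
        · exact h2m x (by simp [h])

lemma walk_head {T : Set (ℤ × ℤ)} :
    ∀ (l : List (ℤ × ℤ)), l.Chain' SiteAdj → (∀ x ∈ l, x ∈ T) →
      ∀ (hne : l ≠ []), ∀ q ∈ l, Walk T (l.head hne) q := by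
  intro l
  induction l with
  | nil => intro _ _ hne; exact absurd rfl hne
  | cons a t ih =>
    intro hc hm _ q hq
    rcases List.mem_cons.1 hq with rfl | hq'
    · exact walk_refl (hm q (by simp))
    · have htne : t ≠ [] := by rintro rfl; simp at hq'
      obtain ⟨l', e1, e2, e3, e4⟩ := ih (List.isChain_cons.1 hc).2
        (fun x hx => hm x (by simp [hx])) htne q hq'
      refine ⟨a :: l', rfl, ?_, ?_, ?_⟩
      · have hl'ne : l' ≠ [] := by rintro rfl; simp at e1
        cases l' with
        | nil => exact absurd rfl hl'ne
        | cons w ws => rw [List.getLast?_cons_cons]; exact e2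
      · rw [List.Chain', List.isChain_cons]
        refine ⟨?_, e3⟩
        intro y hy
        rw [e1] at hy
        simp at hy
        subst hy
        exact (List.isChain_cons.1 hc).1 (t.head htne)
          (by simp [List.head?_eq_head htne])
      · intro x hx
        rcases List.mem_cons.1 hx with rfl | hx'
        · exact hm x (by simp)
        · exact e4 x hx'

lemma walk_of_mems {T : Set (ℤ × ℤ)} {l : List (ℤ × ℤ)} (hc : l.Chain' SiteAdj)
    (hm : ∀ x ∈ l, x ∈ T) {p q : ℤ × ℤ} (hp : p ∈ l) (hq : q ∈ l) : Walk T p q := by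
  have hne : l ≠ [] := by rintro rfl; simp at hp
  exact walk_trans (walk_symm (walk_head l hc hm hne p hp)) (walk_head l hc hm hne q hq)

lemma path_toList {n : ℕ} (f : Fin (n + 1) → ℤ × ℤ)
    (hadj : ∀ i : Fin n, SiteAdj (f i.castSucc) (f i.succ)) :
    ∃ l : List (ℤ × ℤ), l ≠ [] ∧ l.Chain' SiteAdj ∧ l.head? = some (f 0) ∧
      l.getLast? = some (f (Fin.last n)) ∧ (∀ x ∈ l, ∃ i, x = f i) := by
  induction n with
  | zero =>
    refine ⟨[f 0], by simp, by simp [List.Chain'], rfl, by simp [Fin.last], ?_⟩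
    intro x hx
    exact ⟨0, by simpa using hx⟩
  | succ n ih =>
    set g : Fin (n + 1) → ℤ × ℤ := fun i => f i.succ with hg
    have hgadj : ∀ i : Fin n, SiteAdj (g i.castSucc) (g i.succ) := by
      intro i
      have := hadj i.succ
      show SiteAdj (f i.castSucc.succ) (f i.succ.succ)
      rw [Fin.succ_castSucc]
      exact this
    obtain ⟨l', e0, e1, e2, e3, e4⟩ := ih g hgadj
    refine ⟨f 0 :: l', by simp, ?_, rfl, ?_, ?_⟩
    · rw [List.Chain', List.isChain_cons]
      refine ⟨?_, e1⟩
      intro y hy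
      rw [e2] at hy
      simp at hy
      subst hy
      have := hadj 0
      simpa [hg] using this
    · cases l' with
      | nil => exact absurd rfl e0
      | cons w ws =>
        rw [List.getLast?_cons_cons, e3]
        congr 1
    · intro x hx
      rcases List.mem_cons.1 hx with rfl | hx'
      · exact ⟨0, rfl⟩
      · obtain ⟨i, hi⟩ := e4 x hx'
        exact ⟨i.succ, hi⟩

lemma walk_toPath {T : Set (ℤ × ℤ)} {p q : ℤ × ℤ} (h : Walk T p q) :
    ∃ m : ℕ, ∃ f : Fin (m + 1) → ℤ × ℤ,
      f 0 = p ∧ f (Fin.last m) = q ∧ (∀ i, f i ∈ T) ∧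
      ∀ i : Fin m, SiteAdj (f i.castSucc) (f i.succ) := by
  obtain ⟨l, hh, hl, hc, hm⟩ := h
  have hne : l ≠ [] := by rintro rfl; simp at hh
  have hlen : l.length - 1 + 1 = l.length := by
    have := List.length_pos_iff.2 hne
    omega
  refine ⟨l.length - 1, fun i => l.get ⟨i.val, by omega⟩, ?_, ?_, ?_, ?_⟩
  · show l.get ⟨(0 : Fin (l.length - 1 + 1)).val, _⟩ = p
    rw [List.head?_eq_head hne] at hh
    simp only [Fin.val_zero]
    rw [List.get_mk_zero]
    simpa using hh
  · show l.get ⟨(Fin.last (l.length - 1)).val, _⟩ = q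
    rw [List.getLast?_eq_getLast (l := l) hne] at hl
    simp only [Fin.val_last]
    rw [List.getLast_eq_getElem] at hl
    have : some (l.get ⟨l.length - 1, by omega⟩) = some q := hl
    simpa using this
  · intro i
    exact hm _ (List.get_mem _ _)
  · intro i
    have := List.isChain_iff_getElem.1 hc i.val (by omega)
    convert this using 2
    all_goals rfl

end WJ

/-- If `(R_m)_{m≥1}` is a well-joined sequence of rectangles with
alternating types starting with `V→H` (so `R_m.x ⊆ R_{m+1}.x` and
`R_{m+1}.y ⊆ R_m.y` for odd `m`, and `R_{m+1}.x ⊆ R_m.x`, `R_m.y ⊆ R_{m+1}.y`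
for even `m`), and a set `S` of open sites contains a vertical crossing of
each `R_{2k−1}` and a horizontal crossing of each `R_{2k}`, then `S` contains
a path-connected subgraph meeting every `R_m`. -/
theorem well_joined_crossings_path (xlo xhi ylo yhi : ℕ → ℤ)
    (hne : ∀ m, 1 ≤ m → xlo m ≤ xhi m ∧ ylo m ≤ yhi m)
    (hodd : ∀ m, 1 ≤ m → Odd m →
      xlo (m + 1) ≤ xlo m ∧ xhi m ≤ xhi (m + 1) ∧
      ylo m ≤ ylo (m + 1) ∧ yhi (m + 1) ≤ yhi m)
    (heven : ∀ m, 1 ≤ m → Even m →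
      xlo m ≤ xlo (m + 1) ∧ xhi (m + 1) ≤ xhi m ∧
      ylo (m + 1) ≤ ylo m ∧ yhi m ≤ yhi (m + 1))
    (S : Set (ℤ × ℤ))
    (hv : ∀ k, 1 ≤ k →
      VCross S (xlo (2 * k - 1)) (xhi (2 * k - 1)) (ylo (2 * k - 1)) (yhi (2 * k - 1)))
    (hh : ∀ k, 1 ≤ k →
      HCross S (xlo (2 * k)) (xhi (2 * k)) (ylo (2 * k)) (yhi (2 * k))) :
    ∃ T : Set (ℤ × ℤ), T ⊆ S ∧
      (∀ p ∈ T, ∀ q ∈ T, ∃ m : ℕ, ∃ f : Fin (m + 1) → ℤ × ℤ,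
        f 0 = p ∧ f (Fin.last m) = q ∧ (∀ i, f i ∈ T) ∧
        ∀ i : Fin m, SiteAdj (f i.castSucc) (f i.succ)) ∧
      ∀ m, 1 ≤ m → ∃ p ∈ T, p ∈ Rect (xlo m) (xhi m) (ylo m) (yhi m) := by
  classical
  open WJ in
  have hVl : ∀ j : ℕ, ∃ l : List (ℤ × ℤ), ∃ hnl : l ≠ [],
      l.Chain' SiteAdj ∧ (∀ x ∈ l, x ∈ S) ∧
      (∀ x ∈ l, xlo (2*j+1) ≤ x.1 ∧ x.1 ≤ xhi (2*j+1) ∧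
        ylo (2*j+1) ≤ x.2 ∧ x.2 ≤ yhi (2*j+1)) ∧
      (l.head hnl).2 = ylo (2*j+1) ∧ (l.getLast hnl).2 = yhi (2*j+1) := by
    intro j
    have e : 2 * (j + 1) - 1 = 2 * j + 1 := by omega
    obtain ⟨m, f, hmem, hadj, h0, hL⟩ := hv (j + 1) (by omega)
    rw [e] at hmem h0 hL
    obtain ⟨l, hnl, hc, hhd, hgl, hml⟩ := WJ.path_toList f hadj
    have hhead : l.head hnl = f 0 := by
      rw [List.head?_eq_head hnl] at hhd; simpa using hhd
    have hlast : l.getLast hnl = f (Fin.last m) := by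
      rw [List.getLast?_eq_getLast (l := l) hnl] at hgl; simpa using hgl
    refine ⟨l, hnl, hc, ?_, ?_, ?_, ?_⟩
    · intro x hx; obtain ⟨i, rfl⟩ := hml x hx; exact (hmem i).1
    · intro x hx; obtain ⟨i, rfl⟩ := hml x hx; exact (hmem i).2
    · rw [hhead]; exact h0
    · rw [hlast]; exact hL
  have hHl : ∀ j : ℕ, ∃ l : List (ℤ × ℤ), ∃ hnl : l ≠ [],
      l.Chain' SiteAdj ∧ (∀ x ∈ l, x ∈ S) ∧
      (∀ x ∈ l, xlo (2*j+2) ≤ x.1 ∧ x.1 ≤ xhi (2*j+2) ∧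
        ylo (2*j+2) ≤ x.2 ∧ x.2 ≤ yhi (2*j+2)) ∧
      (l.head hnl).1 = xlo (2*j+2) ∧ (l.getLast hnl).1 = xhi (2*j+2) := by
    intro j
    have e : 2 * (j + 1) = 2 * j + 2 := by omega
    obtain ⟨m, f, hmem, hadj, h0, hL⟩ := hh (j + 1) (by omega)
    rw [e] at hmem h0 hL
    obtain ⟨l, hnl, hc, hhd, hgl, hml⟩ := WJ.path_toList f hadj
    have hhead : l.head hnl = f 0 := by
      rw [List.head?_eq_head hnl] at hhd; simpa using hhd
    have hlast : l.getLast hnl = f (Fin.last m) := by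
      rw [List.getLast?_eq_getLast (l := l) hnl] at hgl; simpa using hgl
    refine ⟨l, hnl, hc, ?_, ?_, ?_, ?_⟩
    · intro x hx; obtain ⟨i, rfl⟩ := hml x hx; exact (hmem i).1
    · intro x hx; obtain ⟨i, rfl⟩ := hml x hx; exact (hmem i).2
    · rw [hhead]; exact h0
    · rw [hlast]; exact hL
  choose Pl Plne PlC PlS PlR Plh Pll using hVl
  choose Ql Qlne QlC QlS QlR Qlh Qll using hHl
  set T : Set (ℤ × ℤ) := {x | ∃ j : ℕ, x ∈ Pl j ∨ x ∈ Ql j} with hT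
  have hPlT : ∀ j, ∀ x ∈ Pl j, x ∈ T := fun j x hx => ⟨j, Or.inl hx⟩
  have hQlT : ∀ j, ∀ x ∈ Ql j, x ∈ T := fun j x hx => ⟨j, Or.inr hx⟩
  have hTS : T ⊆ S := by
    rintro x ⟨j, hx | hx⟩
    · exact PlS j x hx
    · exact QlS j x hx
  have c1 : ∀ j, ∃ c, c ∈ Pl j ∧ c ∈ Ql j := by
    intro j
    have ho := hodd (2*j+1) (by omega) ⟨j, by ring⟩
    have e : 2*j+1+1 = 2*j+2 := by omega
    rw [e] at ho
    exact WJ.crossing (xlo (2*j+1)) (xhi (2*j+1)) (ylo (2*j+1)) (yhi (2*j+1))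
      (xlo (2*j+2)) (xhi (2*j+2)) (ylo (2*j+2)) (yhi (2*j+2))
      ho.1 ho.2.1 ho.2.2.1 ho.2.2.2 (Pl j) (Ql j) (Plne j) (Qlne j)
      (PlC j) (QlC j) (PlR j) (QlR j) (Plh j) (Pll j) (Qlh j) (Qll j)
  have c2 : ∀ j, ∃ c, c ∈ Pl (j+1) ∧ c ∈ Ql j := by
    intro j
    have he := heven (2*j+2) (by omega) ⟨j+1, by ring⟩
    have e : 2*j+2+1 = 2*(j+1)+1 := by omega
    rw [e] at he
    exact WJ.crossing (xlo (2*(j+1)+1)) (xhi (2*(j+1)+1)) (ylo (2*(j+1)+1)) (yhi (2*(j+1)+1))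
      (xlo (2*j+2)) (xhi (2*j+2)) (ylo (2*j+2)) (yhi (2*j+2))
      he.1 he.2.1 he.2.2.1 he.2.2.2 (Pl (j+1)) (Ql j) (Plne (j+1)) (Qlne j)
      (PlC (j+1)) (QlC j) (PlR (j+1)) (QlR j) (Plh (j+1)) (Pll (j+1)) (Qlh j) (Qll j)
  set base : ℤ × ℤ := (Pl 0).head (Plne 0) with hbase_def
  have claimP : ∀ j, ∀ x ∈ Pl j, WJ.Walk T base x := by
    intro j
    induction j with
    | zero =>
      intro x hx
      exact WJ.walk_of_mems (PlC 0) (hPlT 0) (List.head_mem _) hx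
    | succ j ih =>
      intro x hx
      obtain ⟨c, hc1, hc2⟩ := c2 j
      obtain ⟨d, hd1, hd2⟩ := c1 j
      exact WJ.walk_trans (WJ.walk_trans (ih d hd1)
        (WJ.walk_of_mems (QlC j) (hQlT j) hd2 hc2))
        (WJ.walk_of_mems (PlC (j+1)) (hPlT (j+1)) hc1 hx)
  have claimQ : ∀ j, ∀ x ∈ Ql j, WJ.Walk T base x := by
    intro j x hx
    obtain ⟨d, hd1, hd2⟩ := c1 j
    exact WJ.walk_trans (claimP j d hd1) (WJ.walk_of_mems (QlC j) (hQlT j) hd2 hx)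
  have hbase : ∀ p ∈ T, WJ.Walk T base p := by
    rintro p ⟨j, hp | hp⟩
    · exact claimP j p hp
    · exact claimQ j p hp
  refine ⟨T, hTS, ?_, ?_⟩
  · intro p hp q hq
    exact WJ.walk_toPath (WJ.walk_trans (WJ.walk_symm (hbase p hp)) (hbase q hq))
  · intro m hm
    rcases Nat.even_or_odd m with heven' | hodd'
    · obtain ⟨r, hr⟩ := heven'
      have hm2 : m = 2 * (r - 1) + 2 := by omega
      refine ⟨(Ql (r-1)).head (Qlne (r-1)), hQlT (r-1) _ (List.head_mem _), ?_⟩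
      rw [hm2]
      exact QlR (r-1) _ (List.head_mem _)
    · obtain ⟨j, hj⟩ := hodd'
      refine ⟨(Pl j).head (Plne j), hPlT j _ (List.head_mem _), ?_⟩
      rw [hj]
      exact PlR j _ (List.head_mem _)
end
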